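/- arXiv:1407.6871 — 14 statements merged into one kernel-verified Lean document; each statement's English description precedes it below -/
import Mathlib

section
/- For each integer n ≥ 1, θ_n < 1/α_n and 1/α_n < 1/(nπ). -/
theorem theta_lt_inv_alpha (α : ℕ → ℝ)
    (hα : ∀ n : ℕ, 1 ≤ n →
      α n ∈ Set.Ioo (n * Real.pi) (n * Real.pi + Real.pi / 2) ∧
        Real.sin (α n) - α n * Real.cos (α n) = 0)
    (n : ℕ) (hn : 1 ≤ n) :
    (n * Real.pi + Real.pi / 2 - α n) < 1 / α n ∧ 1 / α n < 1 / (n * Real.pi) := by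
  obtain ⟨⟨h1, h2⟩, heq⟩ := hα n hn
  have hπ := Real.pi_pos
  have hn' : (1 : ℝ) ≤ n := by exact_mod_cast hn
  have hnπ : 0 < (n : ℝ) * Real.pi := by nlinarith
  have hα0 : 0 < α n := lt_trans hnπ h1
  set θ : ℝ := n * Real.pi + Real.pi / 2 - α n with hθdef
  have hθ1 : 0 < θ := by simp [hθdef]; linarith
  have hθ2 : θ < Real.pi / 2 := by simp [hθdef]; linarith
  have hαeq : α n = n * Real.pi + (Real.pi / 2 - θ) := by rw [hθdef]; ring
  have hcosn : Real.cos (n * Real.pi) = (-1 : ℝ) ^ n := by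
    simpa using Real.cos_nat_mul_pi_sub 0 n
  have hs : Real.sin (α n) = (-1 : ℝ) ^ n * Real.cos θ := by
    rw [hαeq, Real.sin_add, Real.sin_nat_mul_pi, hcosn,
      Real.sin_pi_div_two_sub, Real.cos_pi_div_two_sub]
    ring
  have hc : Real.cos (α n) = (-1 : ℝ) ^ n * Real.sin θ := by
    rw [hαeq, Real.cos_add, Real.sin_nat_mul_pi, hcosn,
      Real.sin_pi_div_two_sub, Real.cos_pi_div_two_sub]
    ring
  have hsign : ((-1 : ℝ) ^ n) ≠ 0 := by
    positivity
  have hkey : Real.cos θ = α n * Real.sin θ := by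
    have h0 : (-1 : ℝ) ^ n * (Real.cos θ - α n * Real.sin θ) = 0 := by
      rw [hs, hc] at heq; linarith [heq]
    rcases mul_eq_zero.mp h0 with h | h
    · exact absurd h hsign
    · linarith
  have hcos : 0 < Real.cos θ := Real.cos_pos_of_mem_Ioo ⟨by linarith, hθ2⟩
  have hsin : 0 < Real.sin θ := Real.sin_pos_of_pos_of_lt_pi hθ1 (hθ2.trans (by linarith : Real.pi / 2 < Real.pi))
  have htan : θ < Real.tan θ := Real.lt_tan hθ1 hθ2
  constructor
  · rw [lt_div_iff₀ hα0]
    have htan' : θ * Real.cos θ < Real.sin θ := by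
      have := htan
      rw [Real.tan_eq_sin_div_cos, lt_div_iff₀ hcos] at this
      linarith
    nlinarith
  · exact one_div_lt_one_div_of_lt hnπ h1
end

section
/- For each integer n ≥ 1, θ_n < (1 + θ_n²)/(nπ + π/2). -/
theorem theta_lt (α : ℕ → ℝ)
    (hα : ∀ n : ℕ, 1 ≤ n →
      α n ∈ Set.Ioo (n * Real.pi) (n * Real.pi + Real.pi / 2) ∧
        Real.sin (α n) - α n * Real.cos (α n) = 0)
    (n : ℕ) (hn : 1 ≤ n) :
    (n * Real.pi + Real.pi / 2 - α n) <
      (1 + (n * Real.pi + Real.pi / 2 - α n) ^ 2) / (n * Real.pi + Real.pi / 2) := by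
  obtain ⟨⟨h1, h2⟩, heq⟩ := hα n hn
  have hpi := Real.pi_pos
  set a := α n with ha
  set θ : ℝ := n * Real.pi + Real.pi / 2 - a with hθ
  clear_value a θ
  have hθ0 : 0 < θ := by simp [hθ]; linarith
  have hθ2 : θ < Real.pi / 2 := by
    have : (1 : ℝ) ≤ (n : ℝ) := by exact_mod_cast hn
    nlinarith
  have hsin : Real.sin θ = Real.cos (n * Real.pi) * Real.cos a := by
    rw [hθ, show (n : ℝ) * Real.pi + Real.pi / 2 - a = (n * Real.pi + Real.pi / 2) + (-a) from by ring,
      Real.sin_add, Real.sin_add, Real.cos_add, Real.sin_nat_mul_pi]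
    simp
  have hcos : Real.cos θ = Real.cos (n * Real.pi) * Real.sin a := by
    rw [hθ, show (n : ℝ) * Real.pi + Real.pi / 2 - a = (n * Real.pi + Real.pi / 2) + (-a) from by ring,
      Real.cos_add, Real.sin_add, Real.cos_add, Real.sin_nat_mul_pi]
    simp
  have hrel : Real.cos θ = a * Real.sin θ := by
    rw [hcos, hsin]
    have hsa : Real.sin a = a * Real.cos a := by linarith
    rw [hsa]; ring
  have hsinpos : 0 < Real.sin θ := Real.sin_pos_of_pos_of_lt_pi hθ0 (by linarith [hθ2, hpi])
  have htan : θ < Real.tan θ := Real.lt_tan hθ0 hθ2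
  have hcospos : 0 < Real.cos θ := Real.cos_pos_of_mem_Ioo ⟨by linarith, hθ2⟩
  have hkey : θ * Real.cos θ < Real.sin θ := by
    rw [Real.tan_eq_sin_div_cos, lt_div_iff₀ hcospos] at htan
    linarith
  have hθa : θ * a < 1 := by
    rw [hrel] at hkey
    nlinarith
  have hS : 0 < (n : ℝ) * Real.pi + Real.pi / 2 := by positivity
  rw [lt_div_iff₀ hS]
  have hexp : θ * ((n : ℝ) * Real.pi + Real.pi / 2) = θ * a + θ ^ 2 := by
    rw [hθ]; ring
  nlinarith [hθa]
end

section
/- For each integer n ≥ 1, θ_n < ((2n+1)/4)·π − √( (((2n+1)/4)·π)² − 1 ). -/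
theorem theta_lt_sqrt (α : ℕ → ℝ)
    (hα : ∀ n : ℕ, 1 ≤ n →
      α n ∈ Set.Ioo (n * Real.pi) (n * Real.pi + Real.pi / 2) ∧
        Real.sin (α n) - α n * Real.cos (α n) = 0)
    (n : ℕ) (hn : 1 ≤ n) :
    (n * Real.pi + Real.pi / 2 - α n) <
      ((2 * n + 1) / 4) * Real.pi -
        Real.sqrt ((((2 * n + 1) / 4) * Real.pi) ^ 2 - 1) := by
  obtain ⟨⟨ha1, ha2⟩, heq⟩ := hα n hn
  have hπ := Real.pi_pos
  have hn1 : (1:ℝ) ≤ (n:ℝ) := by exact_mod_cast hn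
  obtain ⟨θ, hθ⟩ : ∃ θ, α n = ↑n * Real.pi + Real.pi / 2 - θ :=
    ⟨↑n * Real.pi + Real.pi / 2 - α n, by ring⟩
  rw [hθ] at ha1 ha2 heq ⊢
  have hgoal : (↑n * Real.pi + Real.pi / 2 - (↑n * Real.pi + Real.pi / 2 - θ)) = θ := by
    ring
  rw [hgoal]
  obtain ⟨A, hA⟩ : ∃ A, A = ↑n * Real.pi + Real.pi / 2 - θ := ⟨_, rfl⟩
  rw [← hA] at heq
  have hθ0 : 0 < θ := by linarith
  have hθπ : θ < Real.pi / 2 := by linarith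
  -- trig identities
  have hrw : A = (Real.pi / 2 - θ) + (n : ℝ) * Real.pi := by rw [hA]; ring
  have hsa : Real.sin A = (-1)^n * Real.cos θ := by
    rw [hrw, Real.sin_add_nat_mul_pi, Real.sin_pi_div_two_sub]
  have hca : Real.cos A = (-1)^n * Real.sin θ := by
    rw [hrw, Real.cos_add_nat_mul_pi, Real.cos_pi_div_two_sub]
  have h1 : ((-1:ℝ)^n)^2 = 1 := by
    rw [← pow_mul, mul_comm, pow_mul]; norm_num
  have hcθ : 0 < Real.cos θ := Real.cos_pos_of_mem_Ioo ⟨by linarith, hθπ⟩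
  have hsθ : 0 < Real.sin θ := Real.sin_pos_of_pos_of_lt_pi hθ0 (by linarith)
  have htan := Real.lt_tan hθ0 hθπ
  rw [Real.tan_eq_sin_div_cos, lt_div_iff₀ hcθ] at htan
  have hsin_eq : Real.sin A = A * Real.cos A := by linarith
  have hcos2 : Real.cos A ^ 2 = Real.sin θ ^ 2 := by
    rw [hca, mul_pow, h1, one_mul]
  have hsc : Real.sin A * Real.cos A = Real.sin θ * Real.cos θ := by
    rw [hsa, hca, show ((-1:ℝ)^n * Real.cos θ) * ((-1:ℝ)^n * Real.sin θ)
      = ((-1:ℝ)^n)^2 * (Real.sin θ * Real.cos θ) by ring, h1, one_mul]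
  have hA2 : A * Real.sin θ ^ 2 = Real.sin θ * Real.cos θ := by
    rw [← hcos2, ← hsc, hsin_eq]; ring
  have h3 : θ * A * Real.sin θ ^ 2 < Real.sin θ ^ 2 := by
    calc θ * A * Real.sin θ ^ 2 = θ * (A * Real.sin θ ^ 2) := by ring
      _ = θ * (Real.sin θ * Real.cos θ) := by rw [hA2]
      _ = θ * Real.cos θ * Real.sin θ := by ring
      _ < Real.sin θ * Real.sin θ := by
          exact mul_lt_mul_of_pos_right htan hsθ
      _ = Real.sin θ ^ 2 := by ring
  have haθ : A * θ < 1 := by nlinarith [sq_nonneg (Real.sin θ), h3, hsθ]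
  -- conclude
  have hcθ' : 0 < (2 * (n:ℝ) + 1) / 4 * Real.pi - θ := by nlinarith
  have hkey : Real.sqrt (((2 * (n:ℝ) + 1) / 4 * Real.pi) ^ 2 - 1)
      < (2 * (n:ℝ) + 1) / 4 * Real.pi - θ := by
    rw [Real.sqrt_lt' hcθ']
    nlinarith [haθ, hA]
  linarith
end

section
/- For each integer n ≥ 1, θ_n > arcsin(1/(nπ + π/2)); in particular θ_n > sin θ_n > 1/(nπ + π/2). -/
theorem theta_gt_arcsin (α : ℕ → ℝ)
    (hα : ∀ n : ℕ, 1 ≤ n →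
      α n ∈ Set.Ioo (n * Real.pi) (n * Real.pi + Real.pi / 2) ∧
        Real.sin (α n) - α n * Real.cos (α n) = 0)
    (n : ℕ) (hn : 1 ≤ n) :
    Real.arcsin (1 / (n * Real.pi + Real.pi / 2)) < (n * Real.pi + Real.pi / 2 - α n) ∧
      Real.sin (n * Real.pi + Real.pi / 2 - α n) < (n * Real.pi + Real.pi / 2 - α n) ∧
        1 / (n * Real.pi + Real.pi / 2) < Real.sin (n * Real.pi + Real.pi / 2 - α n) := by
  obtain ⟨⟨h1, h2⟩, heq⟩ := hα n hn
  have hπ := Real.pi_pos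
  have hn1 : (1 : ℝ) ≤ (n : ℝ) := by exact_mod_cast hn
  set θ : ℝ := n * Real.pi + Real.pi / 2 - α n with hθdef
  have hθ0 : 0 < θ := by simp only [hθdef]; linarith
  have hθ2 : θ < Real.pi / 2 := by
    have : (n : ℝ) * Real.pi < α n := h1
    simp only [hθdef]; linarith
  -- trig identities
  have hαθ : α n = n * Real.pi + (Real.pi / 2 - θ) := by simp [hθdef]; ring
  have hsinα : Real.sin (α n) = Real.cos (n * Real.pi) * Real.cos θ := by
    rw [hαθ, Real.sin_add, Real.sin_nat_mul_pi, Real.sin_pi_div_two_sub]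
    ring
  have hcosα : Real.cos (α n) = Real.cos (n * Real.pi) * Real.sin θ := by
    rw [hαθ, Real.cos_add, Real.sin_nat_mul_pi, Real.cos_pi_div_two_sub]
    ring
  have hcosnsq : Real.cos (n * Real.pi) ^ 2 = 1 := by
    have := Real.sin_sq_add_cos_sq ((n : ℝ) * Real.pi)
    rw [Real.sin_nat_mul_pi] at this
    nlinarith
  have hcosn0 : Real.cos ((n : ℝ) * Real.pi) ≠ 0 := by
    intro h; rw [h] at hcosnsq; norm_num at hcosnsq
  have key : Real.cos θ = α n * Real.sin θ := by
    rw [hsinα, hcosα] at heq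
    have : Real.cos ((n:ℝ) * Real.pi) * (Real.cos θ - α n * Real.sin θ) = 0 := by
      ring_nf; ring_nf at heq; linarith
    rcases mul_eq_zero.mp this with h | h
    · exact absurd h hcosn0
    · linarith
  have hsinθ : 0 < Real.sin θ :=
    Real.sin_pos_of_pos_of_lt_pi hθ0 (lt_trans hθ2 (by linarith))
  have hsinlt : Real.sin θ < θ := Real.sin_lt hθ0
  have hcosθ : 0 < Real.cos θ :=
    Real.cos_pos_of_mem_Ioo ⟨by linarith, hθ2⟩
  have hident := Real.sin_sq_add_cos_sq θ
  have hcoslt : Real.cos θ < 1 := by nlinarith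
  have hM : 0 < (n : ℝ) * Real.pi + Real.pi / 2 := by nlinarith
  have hmain : 1 < Real.sin θ * ((n : ℝ) * Real.pi + Real.pi / 2) := by
    have hexp : Real.sin θ * ((n : ℝ) * Real.pi + Real.pi / 2)
        = Real.cos θ + θ * Real.sin θ := by
      have : (n : ℝ) * Real.pi + Real.pi / 2 = α n + θ := by simp [hθdef]
      rw [this, key]; ring
    rw [hexp]
    nlinarith [mul_lt_mul_of_pos_right hsinlt hsinθ,
      mul_nonneg hcosθ.le (sub_nonneg.mpr hcoslt.le)]
  have hthird : 1 / ((n : ℝ) * Real.pi + Real.pi / 2) < Real.sin θ := by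
    rw [div_lt_iff₀ hM]
    exact hmain
  refine ⟨?_, hsinlt, hthird⟩
  rw [Real.arcsin_lt_iff_lt_sin' ⟨by linarith, by linarith⟩]
  exact hthird
end

section
/- For each integer n ≥ 1, 0 < θ_n − θ_{n+1} < π/(α_n · α_{n+1}). -/
open Real

lemma arctan_lt_self' {t : ℝ} (ht : 0 < t) : Real.arctan t < t := by
  have h1 : 0 < Real.arctan t := by
    have := Real.arctan_strictMono ht
    rwa [Real.arctan_zero] at this
  have h2 : Real.arctan t < Real.tan (Real.arctan t) :=
    Real.lt_tan h1 (Real.arctan_lt_pi_div_two t)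
  rwa [Real.tan_arctan] at h2

lemma theta_eq (n : ℕ) (a : ℝ) (h1 : n * Real.pi < a) (h2 : a < n * Real.pi + Real.pi / 2)
    (heq : Real.sin a - a * Real.cos a = 0) (ha : 0 < a) :
    n * Real.pi + Real.pi / 2 - a = Real.arctan (1 / a) := by
  have hpi := Real.pi_pos
  set θ : ℝ := n * Real.pi + Real.pi / 2 - a with hθ
  have hθ1 : 0 < θ := by simp [hθ]; linarith
  have hθ2 : θ < Real.pi / 2 := by simp [hθ]; linarith
  have hae : a = n * Real.pi - (θ - Real.pi / 2) := by rw [hθ]; ring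
  have hsin : Real.sin a = (-1) ^ n * Real.cos θ := by
    rw [hae, Real.sin_nat_mul_pi_sub, Real.sin_sub_pi_div_two]; ring
  have hcos : Real.cos a = (-1) ^ n * Real.sin θ := by
    rw [hae, Real.cos_nat_mul_pi_sub, Real.cos_sub_pi_div_two]
  have hkey : Real.cos θ = a * Real.sin θ := by
    rw [hsin, hcos] at heq
    rcases Nat.even_or_odd n with h | h
    · rw [h.neg_one_pow] at heq; linarith
    · rw [h.neg_one_pow] at heq; linarith
  have hsθ : 0 < Real.sin θ := Real.sin_pos_of_pos_of_lt_pi hθ1 (by rw [hθ]; linarith)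
  have hcθ : Real.cos θ ≠ 0 := by rw [hkey]; positivity
  have htan : Real.tan θ = 1 / a := by
    rw [Real.tan_eq_sin_div_cos, hkey]
    field_simp
  rw [← htan, Real.arctan_tan (by linarith [Real.pi_pos]) hθ2]

theorem theta_diff (α : ℕ → ℝ)
    (hα : ∀ n : ℕ, 1 ≤ n →
      α n ∈ Set.Ioo (n * Real.pi) (n * Real.pi + Real.pi / 2) ∧
        Real.sin (α n) - α n * Real.cos (α n) = 0)
    (n : ℕ) (hn : 1 ≤ n) :
    0 < (n * Real.pi + Real.pi / 2 - α n) - ((n + 1) * Real.pi + Real.pi / 2 - α (n + 1)) ∧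
      (n * Real.pi + Real.pi / 2 - α n) - ((n + 1) * Real.pi + Real.pi / 2 - α (n + 1)) <
        Real.pi / (α n * α (n + 1)) := by
  obtain ⟨⟨ha1, ha2⟩, haeq⟩ := hα n hn
  obtain ⟨⟨hb1, hb2⟩, hbeq⟩ := hα (n + 1) (by omega)
  have hpi := Real.pi_pos
  have hn1 : (1 : ℝ) ≤ (n : ℝ) := by exact_mod_cast hn
  have ha0 : 0 < α n := by nlinarith
  have hb0 : 0 < α (n + 1) := by push_cast at hb1; nlinarith
  have hA : n * Real.pi + Real.pi / 2 - α n = Real.arctan (1 / α n) :=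
    theta_eq n (α n) ha1 ha2 haeq ha0
  have hB : (n + 1 : ℕ) * Real.pi + Real.pi / 2 - α (n + 1) = Real.arctan (1 / α (n + 1)) :=
    theta_eq (n + 1) (α (n + 1)) hb1 hb2 hbeq hb0
  have hBcast : ((n : ℝ) + 1) * Real.pi + Real.pi / 2 - α (n + 1) =
      Real.arctan (1 / α (n + 1)) := by push_cast at hB; exact hB
  have hab : α n < α (n + 1) := by push_cast at hb1; nlinarith
  have hinv : 1 / α (n + 1) < 1 / α n := by
    apply one_div_lt_one_div_of_lt ha0 hab
  have hpos : 0 < Real.arctan (1 / α n) - Real.arctan (1 / α (n + 1)) :=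
    sub_pos.2 (Real.arctan_strictMono hinv)
  -- rewrite goal
  rw [hA, hBcast]
  refine ⟨hpos, ?_⟩
  set a := α n
  set b := α (n + 1)
  have hsum : Real.arctan (1 / a) - Real.arctan (1 / b) =
      Real.arctan ((b - a) / (a * b + 1)) := by
    have h1 : (1 / a) * (-(1 / b)) < 1 := by
      have : (1 / a) * (-(1 / b)) < 0 := by
        apply mul_neg_of_pos_of_neg (by positivity)
        simpa using (by positivity : 0 < 1 / b)
      linarith
    have := Real.arctan_add (x := 1 / a) (y := -(1 / b)) h1
    rw [Real.arctan_neg] at this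
    rw [sub_eq_add_neg, this]
    congr 1
    have : a ≠ 0 := ha0.ne'
    have : b ≠ 0 := hb0.ne'
    have : a * b + 1 ≠ 0 := by positivity
    field_simp
    rw [sub_neg_eq_add, mul_div_assoc, div_self this]
    ring
  have hD : Real.arctan (1 / a) - Real.arctan (1 / b) = (b - a) - Real.pi := by
    rw [← hA, ← hBcast]; ring
  have htpos : 0 < (b - a) / (a * b + 1) := by
    apply div_pos (by linarith [hD, hpos]) (by positivity)
  have hlt : Real.arctan ((b - a) / (a * b + 1)) < (b - a) / (a * b + 1) :=
    arctan_lt_self' htpos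
  rw [hsum] at hD ⊢
  rw [hD] at hlt ⊢
  have h1 : (b - a - Real.pi) * (a * b + 1) < b - a :=
    (lt_div_iff₀ (by positivity : (0:ℝ) < a * b + 1)).1 hlt
  rw [lt_div_iff₀ (by positivity : (0:ℝ) < a * b)]
  nlinarith
end

section
/- For each integer n ≥ 1, define C_n = ((α_{n+1} − α_n)²/(π²·α_n²·α_{n+1}²)) · [ (α_{n+1}⁵ − α_n⁵)/10 + ((α_{n+1} − α_n)/4)·(1 + (α_{n+1}·α_n − 1)/((1 + α_{n+1}²)(1 + α_n²))) ]. Then C_n < 2 for every integer n ≥ 2, and C_1 < 2.26. -/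
open Real

/-- If `sin a = a cos a`, then with `u = nπ + π/2 - a` we have `cos u = a sin u`. -/
private lemma cot_eq (n : ℕ) (a : ℝ) (heq : Real.sin a - a * Real.cos a = 0) :
    Real.cos ((n : ℝ) * π + π / 2 - a) = a * Real.sin ((n : ℝ) * π + π / 2 - a) := by
  have hcn : Real.cos ((n : ℝ) * π) = (-1) ^ n := by
    simpa using Real.cos_nat_mul_pi_sub 0 n
  have ha : a = (n : ℝ) * π + (π / 2 - ((n : ℝ) * π + π / 2 - a)) := by ring
  have h1 : Real.sin a = (-1) ^ n * Real.cos ((n : ℝ) * π + π / 2 - a) := by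
    conv_lhs => rw [ha]
    rw [Real.sin_add, Real.sin_nat_mul_pi, hcn, Real.sin_pi_div_two_sub]
    ring
  have h2 : Real.cos a = (-1) ^ n * Real.sin ((n : ℝ) * π + π / 2 - a) := by
    conv_lhs => rw [ha]
    rw [Real.cos_add, Real.sin_nat_mul_pi, hcn, Real.cos_pi_div_two_sub]
    ring
  rw [h1, h2] at heq
  have h4 : ((-1 : ℝ)) ^ n ≠ 0 := pow_ne_zero n (by norm_num)
  have h3 : ((-1 : ℝ)) ^ n * (Real.cos ((n : ℝ) * π + π / 2 - a)
      - a * Real.sin ((n : ℝ) * π + π / 2 - a)) = 0 := by linear_combination heq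
  rcases mul_eq_zero.mp h3 with h | h
  · exact absurd h h4
  · linarith

private lemma alpha_gt {n : ℕ} {a v A : ℝ} (h1 : (n : ℝ) * π < a)
    (h2 : a < (n : ℝ) * π + π / 2) (heq : Real.sin a - a * Real.cos a = 0)
    (hv0 : 0 < v) (hv2 : v < π / 2) (hA : A < a)
    (hs : 0 < Real.sin v) (hcot : Real.cos v < A * Real.sin v) :
    (n : ℝ) * π + π / 2 - v < a := by
  by_contra hcon
  push_neg at hcon
  have hkey := cot_eq n a heq
  have hnp : (0 : ℝ) ≤ (n : ℝ) * π := by positivity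
  have ha0 : 0 < a := lt_of_le_of_lt hnp h1
  have hπ := Real.pi_pos
  have hu0 : 0 < (n : ℝ) * π + π / 2 - a := by linarith
  have hu2 : (n : ℝ) * π + π / 2 - a < π / 2 := by linarith
  have hvu : v ≤ (n : ℝ) * π + π / 2 - a := by linarith
  have hsin : Real.sin v ≤ Real.sin ((n : ℝ) * π + π / 2 - a) :=
    Real.strictMonoOn_sin.monotoneOn ⟨by linarith, by linarith⟩ ⟨by linarith, by linarith⟩ hvu
  have hcos : Real.cos ((n : ℝ) * π + π / 2 - a) ≤ Real.cos v :=
    Real.strictAntiOn_cos.antitoneOn ⟨by linarith, by linarith⟩ ⟨by linarith, by linarith⟩ hvu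
  have hm1 : a * Real.sin v ≤ a * Real.sin ((n : ℝ) * π + π / 2 - a) :=
    mul_le_mul_of_nonneg_left hsin ha0.le
  have hm2 : A * Real.sin v < a * Real.sin v := mul_lt_mul_of_pos_right hA hs
  linarith

private lemma alpha_lt {n : ℕ} {a v B : ℝ} (h1 : (n : ℝ) * π < a)
    (h2 : a < (n : ℝ) * π + π / 2) (heq : Real.sin a - a * Real.cos a = 0)
    (hv0 : 0 < v) (hv2 : v < π / 2) (hB : a < B)
    (hcot : B * Real.sin v < Real.cos v) :
    a < (n : ℝ) * π + π / 2 - v := by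
  by_contra hcon
  push_neg at hcon
  have hkey := cot_eq n a heq
  have hnp : (0 : ℝ) ≤ (n : ℝ) * π := by positivity
  have ha0 : 0 < a := lt_of_le_of_lt hnp h1
  have hπ := Real.pi_pos
  have hu0 : 0 < (n : ℝ) * π + π / 2 - a := by linarith
  have huv : (n : ℝ) * π + π / 2 - a ≤ v := by linarith
  have hsv : 0 < Real.sin v := Real.sin_pos_of_pos_of_lt_pi hv0 (by linarith)
  have hsin : Real.sin ((n : ℝ) * π + π / 2 - a) ≤ Real.sin v :=
    Real.strictMonoOn_sin.monotoneOn ⟨by linarith, by linarith⟩ ⟨by linarith, by linarith⟩ huv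
  have hcos : Real.cos v ≤ Real.cos ((n : ℝ) * π + π / 2 - a) :=
    Real.strictAntiOn_cos.antitoneOn ⟨by linarith, by linarith⟩ ⟨by linarith, by linarith⟩ huv
  have hm1 : a * Real.sin ((n : ℝ) * π + π / 2 - a) ≤ a * Real.sin v :=
    mul_le_mul_of_nonneg_left hsin ha0.le
  have hm2 : a * Real.sin v < B * Real.sin v := mul_lt_mul_of_pos_right hB hsv
  linarith

private lemma cot_num_lt {w A : ℝ} (hw0 : 0 < w) (hw1 : w ≤ 1) (hA : 0 ≤ A)
    (hp1 : 0 < w - w ^ 3 / 6 - w ^ 4 * (5 / 96))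
    (hp2 : 0 < 1 - w ^ 2 / 2 - w ^ 4 * (5 / 96))
    (hp3 : 2 * (1 - w ^ 2 / 2 + w ^ 4 * (5 / 96)) ^ 2 - 1 <
      A * (2 * ((w - w ^ 3 / 6 - w ^ 4 * (5 / 96)) * (1 - w ^ 2 / 2 - w ^ 4 * (5 / 96))))) :
    Real.cos (2 * w) < A * Real.sin (2 * w) ∧ 0 < Real.sin (2 * w) := by
  have hw : |w| ≤ 1 := by rw [abs_of_pos hw0]; exact hw1
  have hs' := abs_le.mp (Real.sin_bound hw)
  have hc' := abs_le.mp (Real.cos_bound hw)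
  rw [abs_of_pos hw0] at hs' hc'
  obtain ⟨hs1, hs2⟩ := hs'
  obtain ⟨hc1, hc2⟩ := hc'
  have hslo : w - w ^ 3 / 6 - w ^ 4 * (5 / 96) ≤ Real.sin w := by nlinarith [mul_le_mul_of_nonneg_left hw1 (pow_nonneg hw0.le 4)]
  have hclo : 1 - w ^ 2 / 2 - w ^ 4 * (5 / 96) ≤ Real.cos w := by linarith
  have hchi : Real.cos w ≤ 1 - w ^ 2 / 2 + w ^ 4 * (5 / 96) := by linarith
  have hsw : 0 < Real.sin w := lt_of_lt_of_le hp1 hslo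
  have hcw : 0 < Real.cos w := lt_of_lt_of_le hp2 hclo
  have hsin2 : 0 < Real.sin (2 * w) := by
    rw [Real.sin_two_mul]; positivity
  refine ⟨?_, hsin2⟩
  rw [Real.cos_two_mul, Real.sin_two_mul]
  have h1 : Real.cos w ^ 2 ≤ (1 - w ^ 2 / 2 + w ^ 4 * (5 / 96)) ^ 2 := by nlinarith
  have h2 : (w - w ^ 3 / 6 - w ^ 4 * (5 / 96)) * (1 - w ^ 2 / 2 - w ^ 4 * (5 / 96)) ≤
      Real.sin w * Real.cos w := mul_le_mul hslo hclo hp2.le hsw.le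
  have h3 : A * (2 * ((w - w ^ 3 / 6 - w ^ 4 * (5 / 96)) * (1 - w ^ 2 / 2 - w ^ 4 * (5 / 96)))) ≤
      A * (2 * (Real.sin w * Real.cos w)) := by
    apply mul_le_mul_of_nonneg_left _ hA
    linarith
  linarith

private lemma cot_num_gt {w B : ℝ} (hw0 : 0 < w) (hw1 : w ≤ 1) (hB : 0 ≤ B)
    (hp1 : 0 < w - w ^ 3 / 6 - w ^ 4 * (5 / 96))
    (hp2 : 0 < 1 - w ^ 2 / 2 - w ^ 4 * (5 / 96))
    (hp3 : B * (2 * ((w - w ^ 3 / 6 + w ^ 4 * (5 / 96)) * (1 - w ^ 2 / 2 + w ^ 4 * (5 / 96)))) <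
      2 * (1 - w ^ 2 / 2 - w ^ 4 * (5 / 96)) ^ 2 - 1) :
    B * Real.sin (2 * w) < Real.cos (2 * w) := by
  have hw : |w| ≤ 1 := by rw [abs_of_pos hw0]; exact hw1
  have hs' := abs_le.mp (Real.sin_bound hw)
  have hc' := abs_le.mp (Real.cos_bound hw)
  rw [abs_of_pos hw0] at hs' hc'
  obtain ⟨hs1, hs2⟩ := hs'
  obtain ⟨hc1, hc2⟩ := hc'
  have hslo : w - w ^ 3 / 6 - w ^ 4 * (5 / 96) ≤ Real.sin w := by nlinarith [mul_le_mul_of_nonneg_left hw1 (pow_nonneg hw0.le 4)]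
  have hshi : Real.sin w ≤ w - w ^ 3 / 6 + w ^ 4 * (5 / 96) := by nlinarith [mul_le_mul_of_nonneg_left hw1 (pow_nonneg hw0.le 4)]
  have hclo : 1 - w ^ 2 / 2 - w ^ 4 * (5 / 96) ≤ Real.cos w := by linarith
  have hchi : Real.cos w ≤ 1 - w ^ 2 / 2 + w ^ 4 * (5 / 96) := by linarith
  have hsw : 0 < Real.sin w := lt_of_lt_of_le hp1 hslo
  have hcw : 0 < Real.cos w := lt_of_lt_of_le hp2 hclo
  rw [Real.cos_two_mul, Real.sin_two_mul]
  have h1 : (1 - w ^ 2 / 2 - w ^ 4 * (5 / 96)) ^ 2 ≤ Real.cos w ^ 2 := by nlinarith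
  have h2 : Real.sin w * Real.cos w ≤
      (w - w ^ 3 / 6 + w ^ 4 * (5 / 96)) * (1 - w ^ 2 / 2 + w ^ 4 * (5 / 96)) :=
    mul_le_mul hshi hchi hcw.le (by linarith)
  have h3 : B * (2 * (Real.sin w * Real.cos w)) ≤
      B * (2 * ((w - w ^ 3 / 6 + w ^ 4 * (5 / 96)) * (1 - w ^ 2 / 2 + w ^ 4 * (5 / 96)))) := by
    apply mul_le_mul_of_nonneg_left _ hB
    linarith
  linarith

private lemma step_lower {n : ℕ} {a : ℝ} (w Aq : ℝ) (h1 : (n : ℝ) * π < a)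
    (h2 : a < (n : ℝ) * π + π / 2) (heq : Real.sin a - a * Real.cos a = 0)
    (hA : Aq < a) (hA0 : 0 ≤ Aq) (hw0 : 0 < w) (hw1 : w ≤ 0.39)
    (hp1 : 0 < w - w ^ 3 / 6 - w ^ 4 * (5 / 96))
    (hp2 : 0 < 1 - w ^ 2 / 2 - w ^ 4 * (5 / 96))
    (hp3 : 2 * (1 - w ^ 2 / 2 + w ^ 4 * (5 / 96)) ^ 2 - 1 <
      Aq * (2 * ((w - w ^ 3 / 6 - w ^ 4 * (5 / 96)) * (1 - w ^ 2 / 2 - w ^ 4 * (5 / 96))))) :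
    (n : ℝ) * π + π / 2 - 2 * w < a := by
  obtain ⟨hcot, hs⟩ := cot_num_lt hw0 (by linarith) hA0 hp1 hp2 hp3
  exact alpha_gt h1 h2 heq (by linarith) (by nlinarith [Real.pi_gt_d6]) hA hs hcot

private lemma step_upper {n : ℕ} {a : ℝ} (w Bq : ℝ) (h1 : (n : ℝ) * π < a)
    (h2 : a < (n : ℝ) * π + π / 2) (heq : Real.sin a - a * Real.cos a = 0)
    (hB : a < Bq) (hB0 : 0 ≤ Bq) (hw0 : 0 < w) (hw1 : w ≤ 0.39)
    (hp1 : 0 < w - w ^ 3 / 6 - w ^ 4 * (5 / 96))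
    (hp2 : 0 < 1 - w ^ 2 / 2 - w ^ 4 * (5 / 96))
    (hp3 : Bq * (2 * ((w - w ^ 3 / 6 + w ^ 4 * (5 / 96)) * (1 - w ^ 2 / 2 + w ^ 4 * (5 / 96)))) <
      2 * (1 - w ^ 2 / 2 - w ^ 4 * (5 / 96)) ^ 2 - 1) :
    a < (n : ℝ) * π + π / 2 - 2 * w := by
  have hcot := cot_num_gt hw0 (by linarith) hB0 hp1 hp2 hp3
  exact alpha_lt h1 h2 heq (by linarith) (by nlinarith [Real.pi_gt_d6]) hB hcot

private lemma poly_bound {t T ST : ℝ} (h1 : 1 ≤ t) (htT : t ≤ T)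
    (hST : 1 + T + T ^ 2 + T ^ 3 + T ^ 4 ≤ ST * T ^ 2) :
    1 + t + t ^ 2 + t ^ 3 + t ^ 4 ≤ ST * t ^ 2 := by
  have hT1 : 1 ≤ T := le_trans h1 htT
  have ht0 : 0 ≤ t := by linarith
  have hT0 : 0 ≤ T := by linarith
  have htT1 : 1 ≤ t * T := by nlinarith [mul_nonneg (sub_nonneg.2 h1) (sub_nonneg.2 hT1)]
  have hsq1 : 1 ≤ t ^ 2 * T ^ 2 := by nlinarith
  have hfac : 0 ≤ t ^ 2 * T ^ 2 * (1 + T + t) - (T + t + t * T) := by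
    nlinarith [mul_nonneg hT0 (sub_nonneg.2 hsq1), mul_nonneg ht0 (sub_nonneg.2 hsq1),
      mul_nonneg (mul_nonneg ht0 hT0) (sub_nonneg.2 htT1)]
  have key : (1 + t + t ^ 2 + t ^ 3 + t ^ 4) * T ^ 2 ≤ (1 + T + T ^ 2 + T ^ 3 + T ^ 4) * t ^ 2 := by
    nlinarith [mul_nonneg (sub_nonneg.2 htT) hfac]
  have h2 : (1 + T + T ^ 2 + T ^ 3 + T ^ 4) * t ^ 2 ≤ ST * T ^ 2 * t ^ 2 := by
    nlinarith [mul_le_mul_of_nonneg_right hST (sq_nonneg t)]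
  have hT2 : 0 < T ^ 2 := by positivity
  have h3 : (1 + t + t ^ 2 + t ^ 3 + t ^ 4) * T ^ 2 ≤ ST * t ^ 2 * T ^ 2 := by nlinarith
  exact le_of_mul_le_mul_right h3 hT2

private lemma K_bound {a b T ST : ℝ} (ha0 : 0 < a) (hab : a ≤ b) (hT : b ≤ T * a)
    (hST : 1 + T + T ^ 2 + T ^ 3 + T ^ 4 ≤ ST * T ^ 2) :
    a ^ 4 + a ^ 3 * b + a ^ 2 * b ^ 2 + a * b ^ 3 + b ^ 4 ≤ ST * (a ^ 2 * b ^ 2) := by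
  have ht1 : 1 ≤ b / a := (one_le_div ha0).2 hab
  have ht2 : b / a ≤ T := by rw [div_le_iff₀ ha0]; linarith [hT]
  have hp := poly_bound ht1 ht2 hST
  have hmul := mul_le_mul_of_nonneg_left hp (le_of_lt (pow_pos ha0 4))
  have hba : b = a * (b / a) := by field_simp
  calc a ^ 4 + a ^ 3 * b + a ^ 2 * b ^ 2 + a * b ^ 3 + b ^ 4
      = a ^ 4 * (1 + b / a + (b / a) ^ 2 + (b / a) ^ 3 + (b / a) ^ 4) := by
        field_simp
    _ ≤ a ^ 4 * (ST * (b / a) ^ 2) := hmul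
    _ = ST * (a ^ 2 * b ^ 2) := by
        field_simp

set_option maxHeartbeats 1000000 in
private lemma C_case {a b r P D ST eps tgt Alo Blo : ℝ}
    (hP : 0 < P) (hPpi : P ≤ π) (htgt : 0 ≤ tgt)
    (hAlo : 0 < Alo) (ha : Alo ≤ a) (hBlo : 0 < Blo) (hb : Blo ≤ b)
    (hab : a < b) (hd : b - a ≤ D) (hD : 0 ≤ D)
    (hK : a ^ 4 + a ^ 3 * b + a ^ 2 * b ^ 2 + a * b ^ 3 + b ^ 4 ≤ ST * (a ^ 2 * b ^ 2))
    (hST : 0 ≤ ST) (hr0 : 0 ≤ r) (heps : 0 ≤ eps)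
    (hr : (b - a) / 4 * (1 + r) ≤ eps * (Alo ^ 2 * Blo ^ 2))
    (hfin : D ^ 2 * (D * ST / 10 + eps) < tgt * P ^ 2) :
    (b - a) ^ 2 / (π ^ 2 * a ^ 2 * b ^ 2) * ((b ^ 5 - a ^ 5) / 10 + (b - a) / 4 * (1 + r)) <
      tgt := by
  have ha0 : 0 < a := lt_of_lt_of_le hAlo ha
  have hb0 : 0 < b := lt_of_lt_of_le hBlo hb
  have hπ := Real.pi_pos
  have hden : 0 < π ^ 2 * a ^ 2 * b ^ 2 := by positivity
  rw [div_mul_eq_mul_div, div_lt_iff₀ hden]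
  have hd0 : (0 : ℝ) ≤ b - a := by linarith
  have hKnn : 0 ≤ a ^ 4 + a ^ 3 * b + a ^ 2 * b ^ 2 + a * b ^ 3 + b ^ 4 := by positivity
  have hE1 : (b ^ 5 - a ^ 5) / 10 ≤ D * (ST * (a ^ 2 * b ^ 2)) / 10 := by
    have h5 : b ^ 5 - a ^ 5 =
        (b - a) * (a ^ 4 + a ^ 3 * b + a ^ 2 * b ^ 2 + a * b ^ 3 + b ^ 4) := by ring
    have := mul_le_mul hd hK hKnn hD
    rw [h5]
    linarith
  have hAB : Alo ^ 2 * Blo ^ 2 ≤ a ^ 2 * b ^ 2 := by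
    have h1 : Alo ^ 2 ≤ a ^ 2 := by nlinarith
    have h2 : Blo ^ 2 ≤ b ^ 2 := by nlinarith
    exact mul_le_mul h1 h2 (sq_nonneg Blo) (sq_nonneg a)
  have hE2 : (b - a) / 4 * (1 + r) ≤ eps * (a ^ 2 * b ^ 2) :=
    le_trans hr (mul_le_mul_of_nonneg_left hAB heps)
  have hE : (b ^ 5 - a ^ 5) / 10 + (b - a) / 4 * (1 + r) ≤ (D * ST / 10 + eps) * (a ^ 2 * b ^ 2) := by
    have : D * (ST * (a ^ 2 * b ^ 2)) / 10 + eps * (a ^ 2 * b ^ 2)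
        = (D * ST / 10 + eps) * (a ^ 2 * b ^ 2) := by ring
    linarith
  have hEnn : 0 ≤ (b ^ 5 - a ^ 5) / 10 + (b - a) / 4 * (1 + r) := by
    have h5 : a ^ 5 ≤ b ^ 5 := by
      have := pow_le_pow_left₀ ha0.le hab.le 5
      linarith
    have h6 : 0 ≤ (b - a) / 4 * (1 + r) := by
      apply mul_nonneg (by linarith) (by linarith)
    linarith
  have hsq : (b - a) ^ 2 ≤ D ^ 2 := by
    have := pow_le_pow_left₀ hd0 hd 2
    linarith
  have hP2 : P ^ 2 ≤ π ^ 2 := by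
    have := pow_le_pow_left₀ hP.le hPpi 2
    linarith
  calc (b - a) ^ 2 * ((b ^ 5 - a ^ 5) / 10 + (b - a) / 4 * (1 + r))
      ≤ D ^ 2 * ((D * ST / 10 + eps) * (a ^ 2 * b ^ 2)) :=
        mul_le_mul hsq hE hEnn (by positivity)
    _ = (D ^ 2 * (D * ST / 10 + eps)) * (a ^ 2 * b ^ 2) := by ring
    _ < (tgt * P ^ 2) * (a ^ 2 * b ^ 2) := by
        apply mul_lt_mul_of_pos_right hfin (by positivity)
    _ ≤ tgt * (π ^ 2 * a ^ 2 * b ^ 2) := by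
        have h := mul_le_mul_of_nonneg_left
          (mul_le_mul_of_nonneg_right hP2 (mul_nonneg (sq_nonneg a) (sq_nonneg b))) htgt
        linarith [h]


private lemma C1_final {a b : ℝ} (ha1 : 4.493185 < a) (ha2 : a < 4.493903)
    (hb1 : 7.724766 < b) (hb2 : b < 7.725291) :
    (b - a) ^ 2 / (π ^ 2 * a ^ 2 * b ^ 2) *
      ((b ^ 5 - a ^ 5) / 10 + (b - a) / 4 * (1 + (b * a - 1) / ((1 + b ^ 2) * (1 + a ^ 2)))) <
      2.26 := by
  have hab : a < b := by linarith
  have ha0 : (0 : ℝ) < a := by linarith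
  have hb0 : (0 : ℝ) < b := by linarith
  have hr0 : (0 : ℝ) ≤ (b * a - 1) / ((1 + b ^ 2) * (1 + a ^ 2)) := by
    apply div_nonneg (by nlinarith) (by positivity)
  have hrR : (b * a - 1) / ((1 + b ^ 2) * (1 + a ^ 2)) ≤ 0.027006 := by
    rw [div_le_iff₀ (by positivity)]
    nlinarith [sq_nonneg (a - 4.493185), sq_nonneg (b - 7.724766)]
  refine C_case (P := 3.141592) (D := 3.232106) (ST := 6.59537) (eps := 0.000689)
    (Alo := 4.493185) (Blo := 7.724766)
    (by norm_num) (by linarith [Real.pi_gt_d6]) (by norm_num) (by norm_num) (by linarith)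
    (by norm_num) (by linarith) hab (by linarith) (by norm_num) ?_ (by norm_num)
    hr0 (by norm_num) ?_ (by norm_num)
  · exact K_bound (T := 1.719336) ha0 hab.le (by linarith) (by norm_num)
  · have h1r : 1 + (b * a - 1) / ((1 + b ^ 2) * (1 + a ^ 2)) ≤ 1.027006 := by linarith
    have hprod : (b - a) / 4 * (1 + (b * a - 1) / ((1 + b ^ 2) * (1 + a ^ 2)))
        ≤ 3.232106 / 4 * 1.027006 :=
      mul_le_mul (by linarith) h1r (by linarith) (by norm_num)
    calc (b - a) / 4 * (1 + (b * a - 1) / ((1 + b ^ 2) * (1 + a ^ 2)))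
        ≤ 3.232106 / 4 * 1.027006 := hprod
      _ ≤ 0.000689 * ((4.493185 : ℝ) ^ 2 * (7.724766 : ℝ) ^ 2) := by norm_num

private lemma C2_final {a b : ℝ} (ha1 : 7.724766 < a) (ha2 : a < 7.725291)
    (hb1 : 9.424776 < b) (hb2 : b < 10.905376) :
    (b - a) ^ 2 / (π ^ 2 * a ^ 2 * b ^ 2) *
      ((b ^ 5 - a ^ 5) / 10 + (b - a) / 4 * (1 + (b * a - 1) / ((1 + b ^ 2) * (1 + a ^ 2)))) <
      2 := by
  have hab : a < b := by linarith
  have ha0 : (0 : ℝ) < a := by linarith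
  have hb0 : (0 : ℝ) < b := by linarith
  have hr0 : (0 : ℝ) ≤ (b * a - 1) / ((1 + b ^ 2) * (1 + a ^ 2)) := by
    apply div_nonneg (by nlinarith) (by positivity)
  have hr1 : (b * a - 1) / ((1 + b ^ 2) * (1 + a ^ 2)) ≤ 1 := by
    rw [div_le_one (by positivity)]
    nlinarith [sq_nonneg (a - b), sq_nonneg (a * b)]
  refine C_case (P := 3.141592) (D := 3.18061) (ST := 5.61486) (eps := 0.000302)
    (Alo := 7.724766) (Blo := 9.424776)
    (by norm_num) (by linarith [Real.pi_gt_d6]) (by norm_num) (by norm_num) (by linarith)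
    (by norm_num) (by linarith) hab (by linarith) (by norm_num) ?_ (by norm_num)
    hr0 (by norm_num) ?_ (by norm_num)
  · exact K_bound (T := 1.411743) ha0 hab.le (by linarith) (by norm_num)
  · have h1r : 1 + (b * a - 1) / ((1 + b ^ 2) * (1 + a ^ 2)) ≤ 2 := by linarith
    have hprod : (b - a) / 4 * (1 + (b * a - 1) / ((1 + b ^ 2) * (1 + a ^ 2)))
        ≤ 3.18061 / 4 * 2 :=
      mul_le_mul (by linarith) h1r (by linarith) (by norm_num)
    calc (b - a) / 4 * (1 + (b * a - 1) / ((1 + b ^ 2) * (1 + a ^ 2)))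
        ≤ 3.18061 / 4 * 2 := hprod
      _ ≤ 0.000302 * ((7.724766 : ℝ) ^ 2 * (9.424776 : ℝ) ^ 2) := by norm_num

private lemma Cgen_final {a b : ℝ} (ha : 10.888 ≤ a) (hab : a < b)
    (hd : b - a ≤ 3.248593) :
    (b - a) ^ 2 / (π ^ 2 * a ^ 2 * b ^ 2) *
      ((b ^ 5 - a ^ 5) / 10 + (b - a) / 4 * (1 + (b * a - 1) / ((1 + b ^ 2) * (1 + a ^ 2)))) <
      2 := by
  have ha0 : (0 : ℝ) < a := by linarith
  have hb0 : (0 : ℝ) < b := by linarith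
  have hb : (10.888 : ℝ) ≤ b := by linarith
  have hr0 : (0 : ℝ) ≤ (b * a - 1) / ((1 + b ^ 2) * (1 + a ^ 2)) := by
    apply div_nonneg (by nlinarith) (by positivity)
  have hr1 : (b * a - 1) / ((1 + b ^ 2) * (1 + a ^ 2)) ≤ 1 := by
    rw [div_le_one (by positivity)]
    nlinarith [sq_nonneg (a - b), sq_nonneg (a * b)]
  refine C_case (P := 3.141592) (D := 3.248593) (ST := 5.34753) (eps := 0.000116)
    (Alo := 10.888) (Blo := 10.888)
    (by norm_num) (by linarith [Real.pi_gt_d6]) (by norm_num) (by norm_num) ha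
    (by norm_num) hb hab hd (by norm_num) ?_ (by norm_num)
    hr0 (by norm_num) ?_ (by norm_num)
  · exact K_bound (T := 1.298366) ha0 hab.le (by linarith) (by norm_num)
  · have h1r : 1 + (b * a - 1) / ((1 + b ^ 2) * (1 + a ^ 2)) ≤ 2 := by linarith
    have hprod : (b - a) / 4 * (1 + (b * a - 1) / ((1 + b ^ 2) * (1 + a ^ 2)))
        ≤ 3.248593 / 4 * 2 :=
      mul_le_mul (by linarith) h1r (by linarith) (by norm_num)
    calc (b - a) / 4 * (1 + (b * a - 1) / ((1 + b ^ 2) * (1 + a ^ 2)))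
        ≤ 3.248593 / 4 * 2 := hprod
      _ ≤ 0.000116 * ((10.888 : ℝ) ^ 2 * (10.888 : ℝ) ^ 2) := by norm_num

set_option maxHeartbeats 4000000 in
theorem C_n_bound (α : ℕ → ℝ)
    (hα : ∀ n : ℕ, 1 ≤ n →
      α n ∈ Set.Ioo (n * Real.pi) (n * Real.pi + Real.pi / 2) ∧
        Real.sin (α n) - α n * Real.cos (α n) = 0)
    (C : ℕ → ℝ)
    (hC : ∀ n : ℕ, 1 ≤ n →
      C n = ((α (n + 1) - α n) ^ 2 / (Real.pi ^ 2 * (α n) ^ 2 * (α (n + 1)) ^ 2)) *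
        (((α (n + 1)) ^ 5 - (α n) ^ 5) / 10 +
          ((α (n + 1) - α n) / 4) *
            (1 + (α (n + 1) * α n - 1) / ((1 + (α (n + 1)) ^ 2) * (1 + (α n) ^ 2))))) :
    (∀ n : ℕ, 2 ≤ n → C n < 2) ∧ C 1 < 2.26 := by
  have hpiL := Real.pi_gt_d6
  have hpiH := Real.pi_lt_d6
  have hπ := Real.pi_pos
  obtain ⟨hm1, he1⟩ := hα 1 le_rfl
  obtain ⟨hm2, he2⟩ := hα 2 (by norm_num)
  obtain ⟨hm3, he3⟩ := hα 3 (by norm_num)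
  have h11 : ((1 : ℕ) : ℝ) * π < α 1 := hm1.1
  have h12 : α 1 < ((1 : ℕ) : ℝ) * π + π / 2 := hm1.2
  have h21 : ((2 : ℕ) : ℝ) * π < α 2 := hm2.1
  have h22 : α 2 < ((2 : ℕ) : ℝ) * π + π / 2 := hm2.2
  have h31 : ((3 : ℕ) : ℝ) * π < α 3 := hm3.1
  have h32 : α 3 < ((3 : ℕ) : ℝ) * π + π / 2 := hm3.2
  -- α₁ lower bound chain
  have hA1a : (4.404139 : ℝ) < α 1 := by
    have hst : (3.141592 : ℝ) < α 1 := by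
      have := h11; push_cast at this; linarith
    have := step_lower (n := 1) 0.1541245 3.141592 h11 h12 he1 hst
      (by norm_num) (by norm_num) (by norm_num) (by norm_num) (by norm_num) (by norm_num)
    push_cast at this; linarith
  have hA1b : (4.489093 : ℝ) < α 1 := by
    have := step_lower (n := 1) 0.1116475 4.404139 h11 h12 he1 hA1a
      (by norm_num) (by norm_num) (by norm_num) (by norm_num) (by norm_num) (by norm_num)
    push_cast at this; linarith
  have hA1 : (4.493185 : ℝ) < α 1 := by
    have := step_lower (n := 1) 0.1096015 4.489093 h11 h12 he1 hA1b
      (by norm_num) (by norm_num) (by norm_num) (by norm_num) (by norm_num) (by norm_num)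
    push_cast at this; linarith
  -- α₁ upper bound chain
  have hB1a : α 1 < (4.712390 : ℝ) := by
    have := h12; push_cast at this; linarith
  have hB1b : α 1 < (4.503307 : ℝ) := by
    have := step_upper (n := 1) 0.1045415 4.712390 h11 h12 he1 hB1a
      (by norm_num) (by norm_num) (by norm_num) (by norm_num) (by norm_num) (by norm_num)
    push_cast at this; linarith
  have hB1 : α 1 < (4.493903 : ℝ) := by
    have := step_upper (n := 1) 0.1092435 4.503307 h11 h12 he1 hB1b
      (by norm_num) (by norm_num) (by norm_num) (by norm_num) (by norm_num) (by norm_num)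
    push_cast at this; linarith
  -- α₂ lower bound chain
  have hA2a : (7.696143 : ℝ) < α 2 := by
    have hst : (6.283184 : ℝ) < α 2 := by
      have := h21; push_cast at this; linarith
    have := step_lower (n := 2) 0.0789185 6.283184 h21 h22 he2 hst
      (by norm_num) (by norm_num) (by norm_num) (by norm_num) (by norm_num) (by norm_num)
    push_cast at this; linarith
  have hA2 : (7.724766 : ℝ) < α 2 := by
    have := step_lower (n := 2) 0.064607 7.696143 h21 h22 he2 hA2a
      (by norm_num) (by norm_num) (by norm_num) (by norm_num) (by norm_num) (by norm_num)
    push_cast at this; linarith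
  -- α₂ upper bound chain
  have hB2a : α 2 < (7.853983 : ℝ) := by
    have := h22; push_cast at this; linarith
  have hB2b : α 2 < (7.727343 : ℝ) := by
    have := step_upper (n := 2) 0.06332 7.853983 h21 h22 he2 hB2a
      (by norm_num) (by norm_num) (by norm_num) (by norm_num) (by norm_num) (by norm_num)
    push_cast at this; linarith
  have hB2 : α 2 < (7.725291 : ℝ) := by
    have := step_upper (n := 2) 0.064346 7.727343 h21 h22 he2 hB2b
      (by norm_num) (by norm_num) (by norm_num) (by norm_num) (by norm_num) (by norm_num)
    push_cast at this; linarith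
  -- α₃ bounds
  have hA3 : (9.424776 : ℝ) < α 3 := by
    have := h31; push_cast at this; linarith
  have hB3a : α 3 < (10.995576 : ℝ) := by
    have := h32; push_cast at this; linarith
  have hB3 : α 3 < (10.905376 : ℝ) := by
    have := step_upper (n := 3) 0.0451 10.995576 h31 h32 he3 hB3a
      (by norm_num) (by norm_num) (by norm_num) (by norm_num) (by norm_num) (by norm_num)
    push_cast at this; linarith
  constructor
  · intro n hn
    rcases Nat.lt_or_ge n 3 with hn3 | hn3
    · have hn2 : n = 2 := by omega
      subst hn2
      rw [hC 2 (by norm_num)]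
      exact C2_final hA2 hB2 hA3 hB3
    · have hn1 : 1 ≤ n := by omega
      obtain ⟨hmn, heqn⟩ := hα n hn1
      obtain ⟨hmn1, heqn1⟩ := hα (n + 1) (by omega)
      have hna : (n : ℝ) * π < α n := hmn.1
      have hnb : α n < (n : ℝ) * π + π / 2 := hmn.2
      have hma : ((n : ℝ) + 1) * π < α (n + 1) := by
        have := hmn1.1; push_cast at this; linarith
      have hmb : α (n + 1) < ((n : ℝ) + 1) * π + π / 2 := by
        have := hmn1.2; push_cast at this; linarith
      have hn3r : (3 : ℝ) ≤ (n : ℝ) := by exact_mod_cast hn3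
      have hnπ : 3 * π ≤ (n : ℝ) * π := by
        have := mul_le_mul_of_nonneg_right hn3r hπ.le
        linarith
      have hAq : (9.424776 : ℝ) < α n := by linarith
      have hstep : (n : ℝ) * π + π / 2 - 2 * 0.0535 < α n :=
        step_lower (n := n) 0.0535 9.424776 hna hnb heqn hAq
          (by norm_num) (by norm_num) (by norm_num) (by norm_num) (by norm_num) (by norm_num)
      have haAlo : (10.888 : ℝ) ≤ α n := by linarith
      have hab : α n < α (n + 1) := by linarith [hnb, hma, hπ]
      have hd : α (n + 1) - α n ≤ 3.248593 := by linarith [hstep, hmb, hpiH]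
      rw [hC n hn1]
      exact Cgen_final haAlo hab hd
  · rw [hC 1 le_rfl]
    exact C1_final hA1 hB1 hA2 hB2
end

section
/- For each integer n ≥ 1, the integral ∫ from α_n to α_{n+1} of u⁴·(sin u)² du equals (α_{n+1}⁵ − α_n⁵)/10 + ((α_{n+1} − α_n)/4)·(1 + (α_{n+1}·α_n − 1)/((1 + α_{n+1}²)(1 + α_n²))). -/
open Real

noncomputable def Fant (u : ℝ) : ℝ :=
  u^5/10 - u^4 * (Real.sin u * Real.cos u)/2 - u^3 * (1 - 2 * Real.sin u ^2)/2
    + 3/2 * u^2 * (Real.sin u * Real.cos u) + 3/4 * u * (1 - 2 * Real.sin u ^2)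
    - 3/4 * (Real.sin u * Real.cos u)

lemma Fant_deriv (u : ℝ) : HasDerivAt Fant (u^4 * Real.sin u ^2) u := by
  have hs := Real.hasDerivAt_sin u
  have hc := Real.hasDerivAt_cos u
  have hsc := hs.mul hc
  have hin : HasDerivAt (fun x => 1 - 2 * Real.sin x ^2)
      (-(2 * (2 * Real.sin u ^ 1 * Real.cos u))) u := by
    simpa using ((hs.pow 2).const_mul 2).const_sub 1
  have H := ((((((hasDerivAt_pow 5 u).div_const 10).sub
      (((hasDerivAt_pow 4 u).mul hsc).div_const 2)).sub
      (((hasDerivAt_pow 3 u).mul hin).div_const 2)).add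
      ((((hasDerivAt_pow 2 u).const_mul (3/2:ℝ)).mul hsc))).add
      (((hasDerivAt_id u).const_mul (3/4:ℝ)).mul hin)).sub (hsc.const_mul (3/4:ℝ))
  refine H.congr_deriv ?_
  simp only [pow_one, id_eq, Pi.mul_apply]
  linear_combination -(u^4/2 - 3/2*u^2 + 3/4) * Real.sin_sq_add_cos_sq u

lemma Fant_val (a : ℝ) (h : Real.sin a = a * Real.cos a) :
    Fant a = a^5/10 + a^3/(4*(1+a^2)) := by
  have h1 : Real.cos a ^2 * (1+a^2) = 1 := by
    linear_combination Real.sin_sq_add_cos_sq a - (Real.sin a + a * Real.cos a) * h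
  have hpos : (1:ℝ) + a^2 > 0 := by positivity
  have hne : (1:ℝ) + a^2 ≠ 0 := by positivity
  have hc2 : Real.cos a ^ 2 = 1/(1+a^2) := by
    rw [eq_div_iff hne]; exact h1
  simp only [Fant, h]
  ring_nf
  rw [hc2]
  field_simp
  ring

theorem integral_eval (α : ℕ → ℝ)
    (hα : ∀ n : ℕ, 1 ≤ n →
      α n ∈ Set.Ioo (n * Real.pi) (n * Real.pi + Real.pi / 2) ∧
        Real.sin (α n) - α n * Real.cos (α n) = 0)
    (n : ℕ) (hn : 1 ≤ n) :
    ∫ u in (α n)..(α (n + 1)), u ^ 4 * Real.sin u ^ 2 =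
      ((α (n + 1)) ^ 5 - (α n) ^ 5) / 10 +
        ((α (n + 1) - α n) / 4) *
          (1 + (α (n + 1) * α n - 1) / ((1 + (α (n + 1)) ^ 2) * (1 + (α n) ^ 2))) := by
  have ha : Real.sin (α n) = α n * Real.cos (α n) := by
    have := (hα n hn).2; linarith
  have hb : Real.sin (α (n+1)) = α (n+1) * Real.cos (α (n+1)) := by
    have := (hα (n+1) (by omega)).2; linarith
  have hint : ∫ u in (α n)..(α (n + 1)), u ^ 4 * Real.sin u ^ 2
      = Fant (α (n+1)) - Fant (α n) := by
    apply intervalIntegral.integral_eq_sub_of_hasDerivAt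
    · intro u _; exact Fant_deriv u
    · exact (Continuous.intervalIntegrable (by continuity)) _ _
  rw [hint, Fant_val _ ha, Fant_val _ hb]
  have h1 : (1:ℝ) + (α n)^2 > 0 := by positivity
  have h2 : (1:ℝ) + (α (n+1))^2 > 0 := by positivity
  field_simp
  ring
end

section
/- For each integer n ≥ 2 and all x, y in the closed interval [1/α_{n+1}, 1/α_n], |x·sin(1/x) − y·sin(1/y)| ≤ √(2·|y − x|). -/
set_option maxHeartbeats 1000000

/-- Core elementary inequality. -/
lemma core_ineq (v h : ℝ) (hv : 2 * Real.pi ≤ v) (hh0 : 0 ≤ h) (hh : h ≤ 3 * Real.pi / 2) :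
    (2 * v * Real.sin (h / 2) + h) ^ 2 ≤ 2 * v * (v + h) * h := by
  have hπ : (3:ℝ) < Real.pi := Real.pi_gt_three
  have hs : Real.sin (h / 2) ≤ h / 2 := Real.sin_le (by linarith)
  have hs0 : 0 ≤ Real.sin (h / 2) :=
    Real.sin_nonneg_of_nonneg_of_le_pi (by linarith) (by linarith)
  have hsq : Real.sin (h / 2) ^ 2 = 1 / 2 - Real.cos h / 2 := by
    have := Real.sin_sq_eq_half_sub (h / 2)
    rwa [show (2:ℝ) * (h / 2) = h by ring] at this
  have hv0 : 0 < v := by nlinarith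
  have hv1 : 1 ≤ v := by nlinarith
  have t1 : 4 * v * h * Real.sin (h / 2) ≤ 4 * v * h * (h / 2) :=
    mul_le_mul_of_nonneg_left hs (by positivity)
  rcases le_total h 1 with hc | hc
  · have hcos : 1 - h ^ 2 / 2 ≤ Real.cos h := Real.one_sub_sq_div_two_le_cos
    have t2 : Real.sin (h / 2) ^ 2 ≤ h ^ 2 / 4 := by rw [hsq]; nlinarith
    have t3 : 4 * v ^ 2 * Real.sin (h / 2) ^ 2 ≤ 4 * v ^ 2 * (h ^ 2 / 4) :=
      mul_le_mul_of_nonneg_left t2 (by positivity)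
    have t4 : v ^ 2 * h ^ 2 ≤ v ^ 2 * h := by
      nlinarith [mul_nonneg (mul_nonneg (sq_nonneg v) hh0) (by linarith : (0:ℝ) ≤ 1 - h)]
    have t5 : h ^ 2 ≤ v ^ 2 * h := by
      nlinarith [mul_le_mul_of_nonneg_right hc hh0,
        mul_le_mul_of_nonneg_right (by nlinarith : (1:ℝ) ≤ v ^ 2) hh0]
    nlinarith [t1, t3, t4, t5]
  · have h1 : (1:ℝ) / 2 ≤ Real.cos 1 := by
      have : (1:ℝ) - 1 ^ 2 / 2 ≤ Real.cos 1 := Real.one_sub_sq_div_two_le_cos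
      linarith
    have hcc : Real.cos 1 - Real.cos h = 2 * Real.sin ((1 + h) / 2) * Real.sin ((h - 1) / 2) := by
      rw [Real.cos_sub_cos, show ((1:ℝ) - h) / 2 = -((h - 1) / 2) by ring, Real.sin_neg]
      ring
    have b1 : Real.sin ((h - 1) / 2) ≤ (h - 1) / 2 := Real.sin_le (by linarith)
    have b2 : Real.sin ((1 + h) / 2) ≤ 1 := Real.sin_le_one _
    have b3 : 0 ≤ Real.sin ((h - 1) / 2) :=
      Real.sin_nonneg_of_nonneg_of_le_pi (by linarith) (by linarith)
    have b4 : 0 ≤ Real.sin ((1 + h) / 2) :=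
      Real.sin_nonneg_of_nonneg_of_le_pi (by linarith) (by linarith)
    have hcosh : Real.cos 1 - (h - 1) ≤ Real.cos h := by nlinarith
    have t2 : Real.sin (h / 2) ^ 2 ≤ (h - 1 / 2) / 2 := by rw [hsq]; linarith
    have thv : h ≤ v := by linarith
    have t3 : 4 * v ^ 2 * Real.sin (h / 2) ^ 2 ≤ 4 * v ^ 2 * ((h - 1 / 2) / 2) :=
      mul_le_mul_of_nonneg_left t2 (by positivity)
    have t5 : h ^ 2 ≤ v ^ 2 := by rw [sq, sq]; exact mul_self_le_mul_self hh0 thv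
    rw [show (2 * v * Real.sin (h / 2) + h) ^ 2
        = 4 * v ^ 2 * Real.sin (h / 2) ^ 2 + 4 * v * h * Real.sin (h / 2) + h ^ 2 by ring,
      show 2 * v * (v + h) * h = 2 * v ^ 2 * h + 2 * v * h ^ 2 by ring]
    linarith [t1, t3, t5]

/-- Key lemma for ordered pairs. -/
lemma key_ineq (x y : ℝ) (hx0 : 0 < x) (hxy : x ≤ y)
    (hw : 2 * Real.pi ≤ 1 / y) (hu : 1 / x ≤ 1 / y + 3 * Real.pi / 2) :
    |x * Real.sin (1 / x) - y * Real.sin (1 / y)| ≤ Real.sqrt (2 * (y - x)) := by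
  have hπ : (3:ℝ) < Real.pi := Real.pi_gt_three
  have hy0 : 0 < y := lt_of_lt_of_le hx0 hxy
  set u := 1 / x with hud
  set w := 1 / y with hwd
  have hu0 : 0 < u := by positivity
  have hw0 : 0 < w := by positivity
  have hwu : w ≤ u := one_div_le_one_div_of_le hx0 hxy
  have hxu : x = 1 / u := (one_div_one_div x).symm
  have hyw : y = 1 / w := (one_div_one_div y).symm
  have hh0 : 0 ≤ u - w := by linarith
  have hh : u - w ≤ 3 * Real.pi / 2 := by linarith
  have hs0 : 0 ≤ Real.sin ((u - w) / 2) :=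
    Real.sin_nonneg_of_nonneg_of_le_pi (by linarith) (by linarith)
  have hsin : |Real.sin u - Real.sin w| ≤ 2 * Real.sin ((u - w) / 2) := by
    rw [Real.sin_sub_sin, abs_mul, abs_mul, abs_two, abs_of_nonneg hs0]
    nlinarith [Real.abs_cos_le_one ((u + w) / 2), hs0]
  have hnum : |w * (Real.sin u - Real.sin w) - (u - w) * Real.sin w|
      ≤ 2 * w * Real.sin ((u - w) / 2) + (u - w) := by
    calc |w * (Real.sin u - Real.sin w) - (u - w) * Real.sin w|
        ≤ |w * (Real.sin u - Real.sin w)| + |(u - w) * Real.sin w| := abs_sub _ _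
      _ ≤ 2 * w * Real.sin ((u - w) / 2) + (u - w) := by
          rw [abs_mul, abs_mul, abs_of_pos hw0, abs_of_nonneg hh0]
          have := Real.abs_sin_le_one w
          nlinarith
  have e : x * Real.sin (1 / x) - y * Real.sin (1 / y)
      = (w * (Real.sin u - Real.sin w) - (u - w) * Real.sin w) / (u * w) := by
    rw [hxu, hyw]
    field_simp
    ring
  have hyx : y - x = (u - w) / (u * w) := by
    rw [hxu, hyw]
    field_simp
  rw [e, hyx]
  apply Real.le_sqrt_of_sq_le
  rw [sq_abs, div_pow, show 2 * ((u - w) / (u * w)) = (2 * (u - w)) / (u * w) by ring,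
    div_le_div_iff₀ (by positivity) (by positivity)]
  have hcore := core_ineq w (u - w) hw hh0 hh
  have hN0 : 0 ≤ 2 * w * Real.sin ((u - w) / 2) + (u - w) := by positivity
  have hsq : (w * (Real.sin u - Real.sin w) - (u - w) * Real.sin w) ^ 2
      ≤ (2 * w * Real.sin ((u - w) / 2) + (u - w)) ^ 2 := by
    rw [← sq_abs (w * (Real.sin u - Real.sin w) - (u - w) * Real.sin w)]
    exact pow_le_pow_left₀ (abs_nonneg _) hnum 2
  nlinarith [mul_le_mul_of_nonneg_right hcore (le_of_lt (mul_pos hu0 hw0)),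
    mul_le_mul_of_nonneg_right hsq (le_of_lt (mul_pos hu0 hw0))]

theorem holder_on_interval (α : ℕ → ℝ)
    (hα : ∀ n : ℕ, 1 ≤ n →
      α n ∈ Set.Ioo (n * Real.pi) (n * Real.pi + Real.pi / 2) ∧
        Real.sin (α n) - α n * Real.cos (α n) = 0)
    (n : ℕ) (hn : 2 ≤ n)
    (x y : ℝ) (hx : x ∈ Set.Icc (1 / α (n + 1)) (1 / α n))
    (hy : y ∈ Set.Icc (1 / α (n + 1)) (1 / α n)) :
    |x * Real.sin (1 / x) - y * Real.sin (1 / y)| ≤ Real.sqrt (2 * |y - x|) := by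
  obtain ⟨⟨h1a, h1b⟩, -⟩ := hα n (by omega)
  obtain ⟨⟨h2a, h2b⟩, -⟩ := hα (n + 1) (by omega)
  push_cast at h2a h2b
  have hπ : (3:ℝ) < Real.pi := Real.pi_gt_three
  have hn2 : (2:ℝ) ≤ (n : ℝ) := by exact_mod_cast hn
  have hαn_gt : 2 * Real.pi < α n := lt_of_le_of_lt (by nlinarith) h1a
  have hαn0 : 0 < α n := by linarith
  have hαm0 : 0 < α (n + 1) := by nlinarith
  have hx0 : 0 < x := lt_of_lt_of_le (by positivity) hx.1
  have hy0 : 0 < y := lt_of_lt_of_le (by positivity) hy.1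
  have hxl : 1 / x ≤ α (n + 1) := by
    have := one_div_le_one_div_of_le (by positivity : 0 < 1 / α (n + 1)) hx.1
    rwa [one_div_one_div] at this
  have hyl : 1 / y ≤ α (n + 1) := by
    have := one_div_le_one_div_of_le (by positivity : 0 < 1 / α (n + 1)) hy.1
    rwa [one_div_one_div] at this
  have hxu : α n ≤ 1 / x := by
    have := one_div_le_one_div_of_le hx0 hx.2
    rwa [one_div_one_div] at this
  have hyu : α n ≤ 1 / y := by
    have := one_div_le_one_div_of_le hy0 hy.2
    rwa [one_div_one_div] at this
  rcases le_total x y with hxy | hxy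
  · rw [abs_of_nonneg (by linarith : (0:ℝ) ≤ y - x)]
    exact key_ineq x y hx0 hxy (by linarith) (by linarith)
  · rw [abs_sub_comm (x * Real.sin (1 / x)), abs_sub_comm y x,
      abs_of_nonneg (by linarith : (0:ℝ) ≤ x - y)]
    exact key_ineq y x hy0 hxy (by linarith) (by linarith)
end

section
/- For all x, y in the closed interval [1/α_2, 1/α_1], |x·sin(1/x) − y·sin(1/y)| ≤ √(2.26·|y − x|). -/
open Real Set

noncomputable def phiAux (t : ℝ) : ℝ := Real.sin t - t * Real.cos t

lemma phiAux_hasDerivAt (t : ℝ) : HasDerivAt phiAux (t * Real.sin t) t := by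
  have h := (Real.hasDerivAt_sin t).sub ((hasDerivAt_id t).mul (Real.hasDerivAt_cos t))
  refine HasDerivAt.congr_deriv h ?_
  simp only [id_eq]
  ring

lemma sq_le_helper {s c : ℝ} (hs : 0 ≤ s) (hc : 0 < c) (h : s ^ 2 ≤ c ^ 2) : s ≤ c := by
  nlinarith

/-- Numeric bounds for the first root. -/
lemma alpha1_bounds {a : ℝ} (h1 : Real.pi < a) (h2 : a < Real.pi + Real.pi / 2)
    (heq : Real.sin a = a * Real.cos a) :
    4.39 ≤ a ∧ Real.cos a ≤ 0 ∧ -Real.cos a ≤ 0.2222 := by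
  have hpi1 : (3.141592 : ℝ) < π := Real.pi_gt_d6
  have hpi2 : π < 3.141593 := Real.pi_lt_d6
  have hcs : Real.cos a ^ 2 * (1 + a ^ 2) = 1 := by
    linear_combination (Real.sin_sq_add_cos_sq a) - (Real.sin a + a * Real.cos a) * heq
  obtain ⟨β, hβa, hβ0, hβlt⟩ : ∃ β : ℝ, a = Real.pi + Real.pi / 2 - β ∧ 0 < β ∧ β < Real.pi / 2 :=
    ⟨Real.pi + Real.pi / 2 - a, by ring, by linarith, by linarith⟩
  have hca : Real.cos a = -Real.sin β := by
    rw [hβa, show Real.pi + Real.pi / 2 - β = (Real.pi / 2 - β) + Real.pi by ring,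
      Real.cos_add_pi, Real.cos_pi_div_two_sub]
  have hsβ : 0 < Real.sin β := Real.sin_pos_of_pos_of_lt_pi hβ0 (by linarith)
  have hsq : Real.sin β ^ 2 * (1 + a ^ 2) = 1 := by
    have h' := hcs
    rw [hca] at h'
    linear_combination h'
  have ha39 : (3.141592 : ℝ) < a := by linarith
  have hsb : Real.sin β ≤ 0.3034 := by
    apply sq_le_helper hsβ.le (by norm_num)
    have h1' : Real.sin β ^ 2 * (1 + 3.141592 ^ 2) ≤ Real.sin β ^ 2 * (1 + a ^ 2) := by
      apply mul_le_mul_of_nonneg_left _ (sq_nonneg _)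
      nlinarith
    rw [hsq] at h1'
    nlinarith [sq_nonneg (Real.sin β)]
  have hβ1 : β < 1 := by
    by_contra hcon
    push_neg at hcon
    have hmono : Real.sin 1 ≤ Real.sin β := by
      apply Real.strictMonoOn_sin.monotoneOn ⟨by linarith, by linarith⟩
        ⟨by linarith, by linarith⟩ hcon
    have := Real.sin_gt_sub_cube one_pos
    norm_num at this
    linarith
  have hcube : β - β ^ 3 / 4 < Real.sin β := by linarith [Real.sin_gt_sub_cube hβ0, pow_pos hβ0 3]
  have hβb : β ≤ 0.316 := by nlinarith [sq_nonneg (β - 0.316), sq_nonneg β, mul_pos hβ0 hβ0]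
  have haL : (4.39 : ℝ) ≤ a := by rw [hβa]; linarith
  refine ⟨haL, by rw [hca]; linarith, ?_⟩
  rw [hca, neg_neg]
  apply sq_le_helper hsβ.le (by norm_num)
  have h1' : Real.sin β ^ 2 * (1 + 4.39 ^ 2) ≤ Real.sin β ^ 2 * (1 + a ^ 2) := by
    apply mul_le_mul_of_nonneg_left _ (sq_nonneg _)
    nlinarith
  rw [hsq] at h1'
  nlinarith [sq_nonneg (Real.sin β)]

/-- Numeric bounds for the second root. -/
lemma alpha2_bounds {b : ℝ} (h1 : 2 * Real.pi < b) (h2 : b < 2 * Real.pi + Real.pi / 2)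
    (heq : Real.sin b = b * Real.cos b) :
    7.69 ≤ b ∧ 0 ≤ Real.cos b ∧ Real.cos b ≤ 0.1291 := by
  have hpi1 : (3.141592 : ℝ) < π := Real.pi_gt_d6
  have hpi2 : π < 3.141593 := Real.pi_lt_d6
  have hcs : Real.cos b ^ 2 * (1 + b ^ 2) = 1 := by
    linear_combination (Real.sin_sq_add_cos_sq b) - (Real.sin b + b * Real.cos b) * heq
  obtain ⟨γ, hγb, hγ0, hγlt⟩ :
      ∃ γ : ℝ, b = 2 * Real.pi + Real.pi / 2 - γ ∧ 0 < γ ∧ γ < Real.pi / 2 :=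
    ⟨2 * Real.pi + Real.pi / 2 - b, by ring, by linarith, by linarith⟩
  have hcb : Real.cos b = Real.sin γ := by
    rw [hγb, show 2 * Real.pi + Real.pi / 2 - γ = (Real.pi / 2 - γ) + 2 * Real.pi by ring,
      Real.cos_add_two_pi, Real.cos_pi_div_two_sub]
  have hsγ : 0 < Real.sin γ := Real.sin_pos_of_pos_of_lt_pi hγ0 (by linarith)
  have hsq : Real.sin γ ^ 2 * (1 + b ^ 2) = 1 := by
    have h' := hcs
    rw [hcb] at h'
    linear_combination h'
  have hb6 : (6.283184 : ℝ) < b := by linarith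
  have hsb : Real.sin γ ≤ 0.1573 := by
    apply sq_le_helper hsγ.le (by norm_num)
    have h1' : Real.sin γ ^ 2 * (1 + 6.283184 ^ 2) ≤ Real.sin γ ^ 2 * (1 + b ^ 2) := by
      apply mul_le_mul_of_nonneg_left _ (sq_nonneg _)
      nlinarith
    rw [hsq] at h1'
    nlinarith [sq_nonneg (Real.sin γ)]
  have hγ1 : γ < 1 := by
    by_contra hcon
    push_neg at hcon
    have hmono : Real.sin 1 ≤ Real.sin γ := by
      apply Real.strictMonoOn_sin.monotoneOn ⟨by linarith, by linarith⟩
        ⟨by linarith, by linarith⟩ hcon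
    have := Real.sin_gt_sub_cube one_pos
    norm_num at this
    linarith
  have hcube : γ - γ ^ 3 / 4 < Real.sin γ := by linarith [Real.sin_gt_sub_cube hγ0, pow_pos hγ0 3]
  have hγg : γ ≤ 0.16 := by nlinarith [sq_nonneg (γ - 0.16), sq_nonneg γ, mul_pos hγ0 hγ0]
  have hbL : (7.69 : ℝ) ≤ b := by rw [hγb]; linarith
  refine ⟨hbL, by rw [hcb]; linarith, ?_⟩
  rw [hcb]
  apply sq_le_helper hsγ.le (by norm_num)
  have h1' : Real.sin γ ^ 2 * (1 + 7.69 ^ 2) ≤ Real.sin γ ^ 2 * (1 + b ^ 2) := by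
    apply mul_le_mul_of_nonneg_left _ (sq_nonneg _)
    nlinarith
  rw [hsq] at h1'
  nlinarith [sq_nonneg (Real.sin γ)]

lemma phiAux_anti : AntitoneOn phiAux (Set.Icc Real.pi (2 * Real.pi)) := by
  apply antitoneOn_of_hasDerivWithinAt_nonpos (convex_Icc _ _)
    (f' := fun t => t * Real.sin t)
  · exact fun t _ => (phiAux_hasDerivAt t).continuousAt.continuousWithinAt
  · exact fun t _ => (phiAux_hasDerivAt t).hasDerivWithinAt
  · intro t ht
    rw [interior_Icc] at ht
    have hs : Real.sin t ≤ 0 := by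
      have h1 : 0 ≤ Real.sin (t - π) :=
        Real.sin_nonneg_of_nonneg_of_le_pi (by linarith [ht.1]) (by linarith [ht.2])
      rw [Real.sin_sub_pi] at h1
      linarith
    have hpos : 0 < t := lt_trans Real.pi_pos ht.1
    nlinarith

lemma phiAux_mono : MonotoneOn phiAux (Set.Icc (2 * Real.pi) (5 * Real.pi / 2)) := by
  apply monotoneOn_of_hasDerivWithinAt_nonneg (convex_Icc _ _)
    (f' := fun t => t * Real.sin t)
  · exact fun t _ => (phiAux_hasDerivAt t).continuousAt.continuousWithinAt
  · exact fun t _ => (phiAux_hasDerivAt t).hasDerivWithinAt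
  · intro t ht
    rw [interior_Icc] at ht
    have hpi := Real.pi_pos
    have hs : 0 ≤ Real.sin t := by
      have h1 : 0 ≤ Real.sin (t - 2 * π) := by
        apply Real.sin_nonneg_of_nonneg_of_le_pi (by linarith [ht.1])
        nlinarith [ht.2]
      rwa [Real.sin_sub_two_pi] at h1
    have hpos : 0 < t := by nlinarith [ht.1]
    positivity

lemma phiAux_two_pi : phiAux (2 * Real.pi) = -(2 * Real.pi) := by
  simp [phiAux, Real.sin_two_pi, Real.cos_two_pi]

theorem holder_first_interval (α : ℕ → ℝ)
    (hα : ∀ n : ℕ, 1 ≤ n →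
      α n ∈ Set.Ioo (n * Real.pi) (n * Real.pi + Real.pi / 2) ∧
        Real.sin (α n) - α n * Real.cos (α n) = 0)
    (x y : ℝ) (hx : x ∈ Set.Icc (1 / α 2) (1 / α 1))
    (hy : y ∈ Set.Icc (1 / α 2) (1 / α 1)) :
    |x * Real.sin (1 / x) - y * Real.sin (1 / y)| ≤ Real.sqrt (2.26 * |y - x|) := by
  obtain ⟨ha, heqa⟩ := hα 1 le_rfl
  obtain ⟨hb, heqb⟩ := hα 2 (by norm_num)
  set a := α 1 with hadef
  set b := α 2 with hbdef
  simp only [Nat.cast_one, Nat.cast_ofNat, one_mul, Set.mem_Ioo] at ha hb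
  have ha1 : Real.pi < a := ha.1
  have ha2 : a < Real.pi + Real.pi / 2 := ha.2
  have hb1 : 2 * Real.pi < b := hb.1
  have hb2 : b < 2 * Real.pi + Real.pi / 2 := hb.2
  have heqa' : Real.sin a = a * Real.cos a := by linarith [heqa]
  have heqb' : Real.sin b = b * Real.cos b := by linarith [heqb]
  have hpi := Real.pi_pos
  have hpi1 : (3.141592 : ℝ) < π := Real.pi_gt_d6
  have hpi2 : π < 3.141593 := Real.pi_lt_d6
  obtain ⟨haL, hcaneg, hcab⟩ := alpha1_bounds ha1 ha2 heqa'
  obtain ⟨hbL, hcbpos, hcbb⟩ := alpha2_bounds hb1 hb2 heqb'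
  have ha0 : 0 < a := lt_trans hpi ha1
  have hb0 : 0 < b := by linarith
  have hab : a < b := by linarith
  set s : Set ℝ := Set.Icc (1 / b) (1 / a) with hsdef
  set f : ℝ → ℝ := fun t => t * Real.sin (1 / t) with hfdef
  -- the derivative of f
  have hderiv : ∀ t : ℝ, 0 < t → HasDerivAt f (phiAux (1 / t)) t := by
    intro t ht
    have hne : t ≠ 0 := ne_of_gt ht
    have hinv : HasDerivAt (fun u : ℝ => 1 / u) (-(1 / t ^ 2)) t := by
      simpa only [one_div] using hasDerivAt_inv hne
    have hsin : HasDerivAt (fun u : ℝ => Real.sin (1 / u))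
        (Real.cos (1 / t) * (-(1 / t ^ 2))) t := (Real.hasDerivAt_sin (1 / t)).comp t hinv
    have h := (hasDerivAt_id t).mul hsin
    have heq2 : phiAux (1 / t)
        = 1 * Real.sin (1 / t) + id t * (Real.cos (1 / t) * (-(1 / t ^ 2))) := by
      simp only [phiAux, id_eq, one_mul]
      field_simp
      ring
    rw [heq2]
    exact h
  -- bounds for phiAux on [a, b]
  have hphi_bounds : ∀ u : ℝ, a ≤ u → u ≤ b → -(2 * Real.pi) ≤ phiAux u ∧ phiAux u ≤ 0 := by
    intro u hau hub
    have hpa : phiAux a = 0 := by simp [phiAux]; linarith [heqa']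
    have hpb : phiAux b = 0 := by simp [phiAux]; linarith [heqb']
    have hma : a ∈ Set.Icc Real.pi (2 * Real.pi) := ⟨ha1.le, by linarith⟩
    have hmb : b ∈ Set.Icc (2 * Real.pi) (5 * Real.pi / 2) := ⟨hb1.le, by linarith⟩
    rcases le_or_gt u (2 * Real.pi) with hcase | hcase
    · have hmu : u ∈ Set.Icc Real.pi (2 * Real.pi) := ⟨by linarith, hcase⟩
      have h1 : phiAux u ≤ phiAux a := phiAux_anti hma hmu hau
      have h2 : phiAux (2 * Real.pi) ≤ phiAux u :=
        phiAux_anti hmu (Set.right_mem_Icc.mpr (by linarith)) hcase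
      rw [phiAux_two_pi] at h2
      rw [hpa] at h1
      exact ⟨h2, h1⟩
    · have hmu : u ∈ Set.Icc (2 * Real.pi) (5 * Real.pi / 2) := ⟨hcase.le, by linarith⟩
      have h1 : phiAux u ≤ phiAux b := phiAux_mono hmu hmb hub
      have h2 : phiAux (2 * Real.pi) ≤ phiAux u :=
        phiAux_mono (Set.left_mem_Icc.mpr (by linarith)) hmu hcase.le
      rw [phiAux_two_pi] at h2
      rw [hpb] at h1
      exact ⟨h2, h1⟩
  -- members of s are positive with 1/t in [a, b]
  have hmem : ∀ t : ℝ, t ∈ s → 0 < t ∧ a ≤ 1 / t ∧ 1 / t ≤ b := by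
    intro t ht
    have hbinv : (0 : ℝ) < 1 / b := by positivity
    have ht0 : 0 < t := lt_of_lt_of_le hbinv ht.1
    refine ⟨ht0, ?_, ?_⟩
    · have h := one_div_le_one_div_of_le ht0 ht.2
      rwa [one_div_one_div] at h
    · have h := one_div_le_one_div_of_le hbinv ht.1
      rwa [one_div_one_div] at h
  -- Lipschitz bound
  have hlip : |f x - f y| ≤ 2 * Real.pi * |x - y| := by
    have h := Convex.norm_image_sub_le_of_norm_hasDerivWithin_le
      (C := 2 * Real.pi) (f' := fun t => phiAux (1 / t))
      (fun t ht => ((hderiv t (hmem t ht).1).hasDerivWithinAt))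
      (fun t ht => by
        obtain ⟨ht0, h1, h2⟩ := hmem t ht
        obtain ⟨hl, hr⟩ := hphi_bounds (1 / t) h1 h2
        have habs : |phiAux (1 / t)| ≤ 2 * Real.pi := abs_le.mpr ⟨by linarith, by linarith⟩
        simpa using habs)
      (convex_Icc _ _) hy hx
    rwa [Real.norm_eq_abs, Real.norm_eq_abs] at h
  -- antitone bound
  have hanti : AntitoneOn f s := by
    apply antitoneOn_of_hasDerivWithinAt_nonpos (convex_Icc _ _)
      (f' := fun t => phiAux (1 / t))
    · intro t ht
      exact (hderiv t (hmem t ht).1).continuousAt.continuousWithinAt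
    · intro t ht
      have ht' : t ∈ s := interior_subset ht
      exact (hderiv t (hmem t ht').1).hasDerivWithinAt
    · intro t ht
      have ht' : t ∈ s := interior_subset ht
      obtain ⟨ht0, h1, h2⟩ := hmem t ht'
      exact (hphi_bounds (1 / t) h1 h2).2
  have hbainv : (1 : ℝ) / b ≤ 1 / a := one_div_le_one_div_of_le ha0 hab.le
  have hmema : 1 / a ∈ s := Set.right_mem_Icc.mpr hbainv
  have hmemb : 1 / b ∈ s := Set.left_mem_Icc.mpr hbainv
  have hfa : f (1 / a) = Real.cos a := by
    simp only [hfdef, one_div_one_div]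
    rw [heqa']
    field_simp
  have hfb : f (1 / b) = Real.cos b := by
    simp only [hfdef, one_div_one_div]
    rw [heqb']
    field_simp
  have hboundM : |f x - f y| ≤ 0.3513 := by
    have h1 : f (1 / a) ≤ f x := hanti hx hmema hx.2
    have h2 : f x ≤ f (1 / b) := hanti hmemb hx hx.1
    have h3 : f (1 / a) ≤ f y := hanti hy hmema hy.2
    have h4 : f y ≤ f (1 / b) := hanti hmemb hy hy.1
    rw [hfa] at h1 h3
    rw [hfb] at h2 h4
    rw [abs_le]
    constructor <;> linarith
  -- conclude
  have hgoal : |f x - f y| ^ 2 ≤ 2.26 * |y - x| := by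
    rw [abs_sub_comm x y] at hlip
    have habsn : (0 : ℝ) ≤ |y - x| := abs_nonneg _
    have hmul : |f x - f y| * |f x - f y| ≤ (2 * Real.pi * |y - x|) * 0.3513 :=
      mul_le_mul hlip hboundM (abs_nonneg _) (by positivity)
    nlinarith [abs_nonneg (f x - f y)]
  calc |x * Real.sin (1 / x) - y * Real.sin (1 / y)| = |f x - f y| := rfl
    _ ≤ Real.sqrt (2.26 * |y - x|) := Real.le_sqrt_of_sq_le hgoal
end

section
/- For all x, y in the closed interval [1/α_2, 1/α_1], |x·sin(1/x) − y·sin(1/y)| ≤ √(2·|y − x|). -/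
open Real

noncomputable def ff (t : ℝ) : ℝ := t * Real.sin (1/t)
noncomputable def fd (t : ℝ) : ℝ := Real.sin (1/t) - Real.cos (1/t) / t
noncomputable def fF (t : ℝ) : ℝ := t * Real.sin (1/t)^2 - (1/2) * (1/t) - Real.sin (2 * (1/t))/4

lemma hasDerivAt_ff {t : ℝ} (ht : t ≠ 0) : HasDerivAt ff (fd t) t := by
  have h1 : HasDerivAt (fun s : ℝ => 1/s) (-(1/t^2)) t := by
    simpa using (hasDerivAt_inv ht)
  have h2 : HasDerivAt (fun s : ℝ => Real.sin (1/s)) (Real.cos (1/t) * (-(1/t^2))) t :=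
    (Real.hasDerivAt_sin (1/t)).comp t h1
  have h3 : HasDerivAt ff (1 * Real.sin (1/t) + t * (Real.cos (1/t) * (-(1/t^2)))) t :=
    (hasDerivAt_id t).mul h2
  convert h3 using 1
  unfold fd
  field_simp
  ring

lemma hasDerivAt_fF {t : ℝ} (ht : t ≠ 0) : HasDerivAt fF (fd t ^ 2) t := by
  have h1 : HasDerivAt (fun s : ℝ => 1/s) (-(1/t^2)) t := by
    simpa using (hasDerivAt_inv ht)
  have h2 : HasDerivAt (fun s : ℝ => Real.sin (1/s)) (Real.cos (1/t) * (-(1/t^2))) t :=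
    (Real.hasDerivAt_sin (1/t)).comp t h1
  have h3 : HasDerivAt (fun s : ℝ => Real.sin (1/s)^2)
      (2 * Real.sin (1/t) * (Real.cos (1/t) * (-(1/t^2)))) t := by
    have := h2.fun_pow 2
    norm_num [mul_comm] at this ⊢
    convert this using 1
  have h4 : HasDerivAt (fun s : ℝ => s * Real.sin (1/s)^2)
      (1 * Real.sin (1/t)^2 + t * (2 * Real.sin (1/t) * (Real.cos (1/t) * (-(1/t^2))))) t :=
    (hasDerivAt_id t).mul h3
  have h5 : HasDerivAt (fun s : ℝ => (1/2 : ℝ) * (1/s)) ((1/2) * (-(1/t^2))) t :=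
    h1.const_mul (1/2)
  have h6 : HasDerivAt (fun s : ℝ => 2 * (1/s)) (2 * (-(1/t^2))) t := h1.const_mul 2
  have h7 : HasDerivAt (fun s : ℝ => Real.sin (2 * (1/s)) / 4)
      ((Real.cos (2 * (1/t)) * (2 * (-(1/t^2)))) / 4) t :=
    (h6.sin).div_const 4
  have h8 := (h4.sub h5).sub h7
  refine h8.congr_deriv ?_
  have hc : Real.cos (2 * (1/t)) = 2 * Real.cos (1/t)^2 - 1 := Real.cos_two_mul _
  rw [hc]
  unfold fd
  field_simp
  ring

lemma contOn_fd {s : Set ℝ} (h : ∀ t ∈ s, t ≠ 0) : ContinuousOn fd s := by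
  unfold fd
  have h1 : ContinuousOn (fun t : ℝ => 1/t) s := continuousOn_const.div continuousOn_id h
  exact (Real.continuous_sin.comp_continuousOn h1).sub
    ((Real.continuous_cos.comp_continuousOn h1).div continuousOn_id h)

lemma cs_integral {g : ℝ → ℝ} {x y : ℝ} (hxy : x ≤ y)
    (hg : ContinuousOn g (Set.uIcc x y)) :
    (∫ t in x..y, g t)^2 ≤ (y - x) * ∫ t in x..y, (g t)^2 := by
  have hgi : IntervalIntegrable g MeasureTheory.volume x y := hg.intervalIntegrable
  have hgsq : IntervalIntegrable (fun t => (g t)^2) MeasureTheory.volume x y :=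
    (hg.pow 2).intervalIntegrable
  rcases eq_or_lt_of_le hxy with rfl | hlt
  · simp
  set I := ∫ t in x..y, g t with hI
  set J := ∫ t in x..y, (g t)^2 with hJ
  have hd : (0:ℝ) < y - x := by linarith
  set A := I / (y - x) with hA
  have h0 : 0 ≤ ∫ t in x..y, (g t - A)^2 :=
    intervalIntegral.integral_nonneg hxy (fun u _ => sq_nonneg _)
  have hexp : ∫ t in x..y, (g t - A)^2 = J - 2*A*I + A^2 * (y - x) := by
    have h1 : (fun t => (g t - A)^2) = (fun t => ((g t)^2 - (2*A) * g t) + A^2) := by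
      funext t; ring
    rw [h1, intervalIntegral.integral_add (hgsq.sub (hgi.const_mul _))
      intervalIntegrable_const, intervalIntegral.integral_sub hgsq (hgi.const_mul _),
      intervalIntegral.integral_const_mul, intervalIntegral.integral_const]
    simp [smul_eq_mul]
    ring
  rw [hexp] at h0
  have h2 : A * (y - x) = I := div_mul_cancel₀ _ hd.ne'
  nlinarith [h0, hd, h2, sq_nonneg (A*(y-x) - I)]

lemma phi_anti : StrictAntiOn (fun t => Real.sin t - t * Real.cos t) (Set.Icc π (2*π)) := by
  apply strictAntiOn_of_deriv_neg (convex_Icc _ _)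
  · fun_prop
  · intro t ht
    rw [interior_Icc] at ht
    have hd : HasDerivAt (fun t => Real.sin t - t * Real.cos t) (t * Real.sin t) t := by
      have := (Real.hasDerivAt_sin t).sub ((hasDerivAt_id t).mul (Real.hasDerivAt_cos t))
      refine this.congr_deriv ?_; simp only [id]; ring
    rw [hd.deriv]
    have hs : Real.sin t < 0 := by
      have h1 : 0 < Real.sin (t - π + π) / (-1) := by
        rw [Real.sin_add_pi]
        have := Real.sin_pos_of_pos_of_lt_pi (x := t - π) (by linarith [ht.1]) (by linarith [ht.2])
        simp only [div_neg, div_one]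
        linarith
      have : Real.sin t = Real.sin (t - π + π) := by ring_nf
      rw [this]
      nlinarith [h1]
    nlinarith [ht.1, Real.pi_pos]

lemma F_eval {A : ℝ} (hA : 0 < A) (h : Real.sin A - A * Real.cos A = 0) :
    fF (1/A) = A/(2*(1+A^2)) - A/2 := by
  unfold fF
  rw [one_div_one_div, Real.sin_two_mul]
  have hpy := Real.sin_sq_add_cos_sq A
  have h2 : Real.sin A ^ 2 * (1 + A^2) = A^2 := by
    linear_combination (Real.sin A + A * Real.cos A) * h + A^2 * hpy
  have hc : A * Real.cos A = Real.sin A := by linarith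
  field_simp
  linear_combination (-4)*Real.sin A*(1+A^2)*hc + (4:ℝ)*h2

lemma phi_four_pos : 0 < Real.sin 4 - 4 * Real.cos 4 := by
  have e1 : Real.sin ((4:ℝ) - π + π) = -Real.sin (4 - π) := Real.sin_add_pi _
  have e2 : Real.cos ((4:ℝ) - π + π) = -Real.cos (4 - π) := Real.cos_add_pi _
  rw [sub_add_cancel] at e1 e2
  have hπl := Real.pi_gt_d6
  have hπu := Real.pi_lt_d6
  have hw0 : 0 < (4:ℝ) - π := by linarith
  have hw1 : (4:ℝ) - π < 0.86 := by linarith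
  have hs : Real.sin (4 - π) < 4 - π := Real.sin_lt hw0
  have hc : 1 - ((4:ℝ) - π)^2/2 ≤ Real.cos (4 - π) := Real.one_sub_sq_div_two_le_cos
  rw [e1, e2]
  nlinarith

lemma g_upper {A : ℝ} (h0 : 0 < A) (h : A ≤ 5*π/2) :
    A/2 - A/(2*(1+A^2)) ≤ 66/17 := by
  have hπu := Real.pi_lt_d6
  have hA : A ≤ 7.8539825 := by linarith
  rw [div_sub_div _ _ (by norm_num) (by positivity), div_le_div_iff₀ (by positivity) (by norm_num)]
  nlinarith [sq_nonneg A, mul_nonneg (sub_nonneg.2 hA) (sq_nonneg A),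
    mul_nonneg (sub_nonneg.2 hA) (mul_nonneg (sub_nonneg.2 hA) (sq_nonneg A)),
    mul_nonneg (sub_nonneg.2 hA) h0.le]

lemma g_lower {A : ℝ} (h : 4 ≤ A) :
    32/17 ≤ A/2 - A/(2*(1+A^2)) := by
  have h0 : (0:ℝ) < A := by linarith
  rw [div_sub_div _ _ (by norm_num) (by positivity), le_div_iff₀ (by positivity)]
  nlinarith [sub_nonneg.2 h, sq_nonneg (A-4), mul_nonneg (sub_nonneg.2 h) (sq_nonneg (A-4)),
    mul_nonneg (sub_nonneg.2 h) (sub_nonneg.2 h)]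

theorem holder_first_interval_improved (α : ℕ → ℝ)
    (hα : ∀ n : ℕ, 1 ≤ n →
      α n ∈ Set.Ioo (n * Real.pi) (n * Real.pi + Real.pi / 2) ∧
        Real.sin (α n) - α n * Real.cos (α n) = 0)
    (x y : ℝ) (hx : x ∈ Set.Icc (1 / α 2) (1 / α 1))
    (hy : y ∈ Set.Icc (1 / α 2) (1 / α 1)) :
    |x * Real.sin (1 / x) - y * Real.sin (1 / y)| ≤ Real.sqrt (2 * |y - x|) := by
  obtain ⟨h1m, e1⟩ := hα 1 le_rfl
  obtain ⟨h2m, e2⟩ := hα 2 (by norm_num)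
  set A1 := α 1 with hA1def
  set A2 := α 2 with hA2def
  have hπ := Real.pi_pos
  have h1l : π < A1 := by simpa using h1m.1
  have h1r : A1 < π + π/2 := by simpa using h1m.2
  have h2l : 2*π < A2 := by
    have := h2m.1; push_cast at this; linarith
  have h2r : A2 < 2*π + π/2 := by
    have := h2m.2; push_cast at this; linarith
  have hπl := Real.pi_gt_d6
  have hπu := Real.pi_lt_d6
  -- A1 ≥ 4
  have h14 : 4 ≤ A1 := by
    by_contra hlt
    push_neg at hlt
    have hmem1 : A1 ∈ Set.Icc π (2*π) := ⟨h1l.le, by linarith⟩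
    have hmem4 : (4:ℝ) ∈ Set.Icc π (2*π) := ⟨by linarith, by linarith⟩
    have := phi_anti hmem1 hmem4 hlt
    simp only at this
    rw [e1] at this
    exact absurd this (not_lt.2 phi_four_pos.le)
  have hA1pos : 0 < A1 := by linarith
  have hA2pos : 0 < A2 := by linarith
  have hA12 : A1 < A2 := by linarith
  set a := 1/A2 with hadef
  set b := 1/A1 with hbdef
  have ha0 : 0 < a := by positivity
  have hab : a < b := by
    rw [hadef, hbdef]
    exact one_div_lt_one_div_of_lt hA1pos hA12
  -- integral of fd^2 over [a,b] is at most 2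
  have hne : ∀ t ∈ Set.uIcc a b, t ≠ 0 := by
    intro t ht
    rw [Set.uIcc_of_le hab.le] at ht
    exact (lt_of_lt_of_le ha0 ht.1).ne'
  have hFab : ∫ t in a..b, fd t ^ 2 = fF b - fF a := by
    refine intervalIntegral.integral_eq_sub_of_hasDerivAt
      (fun t ht => hasDerivAt_fF (hne t ht)) ?_
    exact ((contOn_fd hne).pow 2).intervalIntegrable
  have hFa : fF a = A2/(2*(1+A2^2)) - A2/2 := F_eval hA2pos e2
  have hFb : fF b = A1/(2*(1+A1^2)) - A1/2 := F_eval hA1pos e1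
  have hint2 : ∫ t in a..b, fd t ^ 2 ≤ 2 := by
    rw [hFab, hFa, hFb]
    have u1 := g_upper hA2pos (by linarith : A2 ≤ 5*π/2)
    have u2 := g_lower h14
    linarith
  -- key claim for ordered pairs
  have key : ∀ u v : ℝ, u ∈ Set.Icc a b → v ∈ Set.Icc a b → u ≤ v →
      (ff v - ff u)^2 ≤ 2 * (v - u) := by
    intro u v hu hv huv
    have hsub : Set.uIcc u v ⊆ Set.uIcc a b := by
      rw [Set.uIcc_of_le hab.le, Set.uIcc_of_le huv]
      exact Set.Icc_subset_Icc hu.1 hv.2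
    have hneuv : ∀ t ∈ Set.uIcc u v, t ≠ 0 := fun t ht => hne t (hsub ht)
    have hcont : ContinuousOn fd (Set.uIcc u v) := contOn_fd hneuv
    have hftc : ∫ t in u..v, fd t = ff v - ff u :=
      intervalIntegral.integral_eq_sub_of_hasDerivAt
        (fun t ht => hasDerivAt_ff (hneuv t ht)) hcont.intervalIntegrable
    have hcs := cs_integral huv hcont
    rw [hftc] at hcs
    -- ∫_u^v fd^2 ≤ ∫_a^b fd^2
    have hmono : ∫ t in u..v, fd t ^ 2 ≤ ∫ t in a..b, fd t ^ 2 := by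
      have hi : ∀ p q : ℝ, p ∈ Set.Icc a b → q ∈ Set.Icc a b →
          IntervalIntegrable (fun t => fd t ^ 2) MeasureTheory.volume p q := by
        intro p q hp hq
        apply ((contOn_fd ?_).pow 2).intervalIntegrable
        intro t ht
        apply hne
        rw [Set.uIcc_of_le hab.le]
        rcases le_total p q with h | h
        · rw [Set.uIcc_of_le h] at ht
          exact ⟨le_trans hp.1 ht.1, le_trans ht.2 hq.2⟩
        · rw [Set.uIcc_of_ge h] at ht
          exact ⟨le_trans hq.1 ht.1, le_trans ht.2 hp.2⟩
      have hmem : ∀ t : ℝ, t ∈ Set.Icc a b → (0:ℝ) ≤ fd t ^ 2 := fun t _ => sq_nonneg _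
      have e3 : (∫ t in a..u, fd t ^ 2) + ∫ t in u..v, fd t ^ 2 = ∫ t in a..v, fd t ^ 2 :=
        intervalIntegral.integral_add_adjacent_intervals
          (hi a u (Set.left_mem_Icc.2 hab.le) hu) (hi u v hu hv)
      have e4 : (∫ t in a..v, fd t ^ 2) + ∫ t in v..b, fd t ^ 2 = ∫ t in a..b, fd t ^ 2 :=
        intervalIntegral.integral_add_adjacent_intervals
          (hi a v (Set.left_mem_Icc.2 hab.le) hv) (hi v b hv (Set.right_mem_Icc.2 hab.le))
      have p1 : 0 ≤ ∫ t in a..u, fd t ^ 2 :=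
        intervalIntegral.integral_nonneg hu.1 (fun t _ => sq_nonneg _)
      have p2 : 0 ≤ ∫ t in v..b, fd t ^ 2 :=
        intervalIntegral.integral_nonneg hv.2 (fun t _ => sq_nonneg _)
      linarith
    have hvu : v - u ≥ 0 := by linarith
    calc (ff v - ff u)^2 ≤ (v - u) * ∫ t in u..v, (fd t)^2 := hcs
      _ ≤ (v - u) * 2 := by
          apply mul_le_mul_of_nonneg_left _ hvu
          exact le_trans hmono hint2
      _ = 2 * (v - u) := by ring
  -- conclude
  have habs : (x * Real.sin (1/x) - y * Real.sin (1/y))^2 ≤ 2 * |y - x| := by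
    rcases le_total x y with h | h
    · have := key x y hx hy h
      rw [abs_of_nonneg (by linarith : (0:ℝ) ≤ y - x)]
      unfold ff at this
      nlinarith [this]
    · have := key y x hy hx h
      rw [abs_of_nonpos (by linarith : y - x ≤ 0)]
      unfold ff at this
      nlinarith [this]
  have h2abs : 0 ≤ 2 * |y - x| := by positivity
  exact (Real.le_sqrt (abs_nonneg _) h2abs).2 (by rw [sq_abs]; exact habs)
end

section
/- For all real x ≥ 1/π and y ≥ 1/π, |x·sin(1/x) − y·sin(1/y)| ≤ √(2·|y − x|). -/
open Real Set

lemma auxF (t : ℝ) : HasDerivAt (fun u : ℝ => u^2/2 - Real.sin u + u * Real.cos u)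
    (t * (1 - Real.sin t)) t := by
  have h := (((hasDerivAt_pow 2 t).div_const 2).sub (Real.hasDerivAt_sin t)).add
    ((hasDerivAt_id t).mul (Real.hasDerivAt_cos t))
  refine h.congr_deriv ?_
  simp only [id]
  ring

lemma aux1 (t : ℝ) (ht : 0 ≤ t) : Real.sin t - t * Real.cos t ≤ t^2/2 := by
  set F : ℝ → ℝ := fun u => u^2/2 - Real.sin u + u * Real.cos u with hF
  have hmono : MonotoneOn F (Ici (0:ℝ)) := by
    apply monotoneOn_of_deriv_nonneg (convex_Ici 0)
    · exact fun u _ => ((auxF u).continuousAt).continuousWithinAt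
    · exact fun u _ => ((auxF u).differentiableAt).differentiableWithinAt
    · intro u hu
      rw [(auxF u).deriv]
      rw [interior_Ici] at hu
      have := Real.sin_le_one u
      nlinarith [le_of_lt (show (0:ℝ) < u from hu)]
  have h0 : F 0 ≤ F t := hmono (self_mem_Ici) ht ht
  simp [hF] at h0
  nlinarith [h0]

lemma aux2 (t : ℝ) (ht : 0 ≤ t) (ht' : t ≤ Real.pi) : t * Real.cos t ≤ Real.sin t := by
  set G : ℝ → ℝ := fun u => Real.sin u - u * Real.cos u with hG
  have hd : ∀ u : ℝ, HasDerivAt G (u * Real.sin u) u := by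
    intro u
    have h := (Real.hasDerivAt_sin u).sub ((hasDerivAt_id u).mul (Real.hasDerivAt_cos u))
    refine h.congr_deriv ?_
    simp only [id]
    ring
  have hmono : MonotoneOn G (Icc 0 Real.pi) := by
    apply monotoneOn_of_deriv_nonneg (convex_Icc 0 Real.pi)
    · exact fun u _ => ((hd u).continuousAt).continuousWithinAt
    · exact fun u _ => ((hd u).differentiableAt).differentiableWithinAt
    · intro u hu
      rw [(hd u).deriv]
      rw [interior_Icc] at hu
      exact mul_nonneg hu.1.le (Real.sin_nonneg_of_nonneg_of_le_pi hu.1.le hu.2.le)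
  have h0 : G 0 ≤ G t := hmono ⟨le_refl 0, Real.pi_pos.le⟩ ⟨ht, ht'⟩ ht
  simp [hG] at h0
  linarith

lemma sinc_lip {a b : ℝ} (ha : a ∈ Ioc 0 Real.pi) (hb : b ∈ Ioc 0 Real.pi) :
    |Real.sin b / b - Real.sin a / a| ≤ (1/2) * |b - a| := by
  have key := Convex.norm_image_sub_le_of_norm_hasDerivWithin_le
    (f := fun u => Real.sin u / u)
    (f' := fun u => (Real.cos u * u - Real.sin u * 1) / u^2) (C := 1/2)
    (s := Ioc 0 Real.pi) ?_ ?_ (convex_Ioc 0 Real.pi) ha hb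
  · simpa using key
  · intro u hu
    exact ((Real.hasDerivAt_sin u).div (hasDerivAt_id u) (ne_of_gt hu.1)).hasDerivWithinAt
  · intro u hu
    have hu0 := hu.1
    have h1 := aux1 u hu0.le
    have h2 := aux2 u hu0.le hu.2
    rw [Real.norm_eq_abs, abs_div, abs_of_nonneg (by positivity : (0:ℝ) ≤ u^2)]
    rw [div_le_iff₀ (by positivity)]
    rw [abs_le]
    constructor <;> nlinarith

theorem holder_far_from_zero (x y : ℝ) (hx : 1 / Real.pi ≤ x) (hy : 1 / Real.pi ≤ y) :
    |x * Real.sin (1 / x) - y * Real.sin (1 / y)| ≤ Real.sqrt (2 * |y - x|) := by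
  have hpi := Real.pi_pos
  have hx0 : 0 < x := lt_of_lt_of_le (by positivity) hx
  have hy0 : 0 < y := lt_of_lt_of_le (by positivity) hy
  have hpx : 1 ≤ x * Real.pi := (div_le_iff₀ hpi).mp hx
  have hpy : 1 ≤ y * Real.pi := (div_le_iff₀ hpi).mp hy
  have hax : 1/x ∈ Ioc 0 Real.pi := ⟨by positivity, by
    rw [div_le_iff₀ hx0]; linarith [hpx]⟩
  have hay : 1/y ∈ Ioc 0 Real.pi := ⟨by positivity, by
    rw [div_le_iff₀ hy0]; linarith [hpy]⟩
  have key := sinc_lip hay hax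
  have e1 : Real.sin (1/x) / (1/x) = x * Real.sin (1/x) := by field_simp
  have e2 : Real.sin (1/y) / (1/y) = y * Real.sin (1/y) := by field_simp
  rw [e1, e2] at key
  have e3 : |1/x - 1/y| = |y - x| / (x*y) := by
    rw [div_sub_div _ _ (ne_of_gt hx0) (ne_of_gt hy0), one_mul, mul_one, abs_div,
      abs_of_pos (by positivity : (0:ℝ) < x*y)]
  rw [e3] at key
  set d := |y - x| with hd
  have hd0 : 0 ≤ d := abs_nonneg _
  have hxy : 1 + Real.pi * d ≤ Real.pi^2 * (x * y) := by
    rcases le_total x y with h | h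
    · have hdd : d = y - x := abs_of_nonneg (by linarith)
      have h1 : 1 + Real.pi * d ≤ y * Real.pi := by
        have : Real.pi * d = y * Real.pi - x * Real.pi := by rw [hdd]; ring
        linarith
      have h2 := mul_le_mul hpx h1 (by positivity) (by positivity)
      nlinarith [h2]
    · have hdd : d = x - y := by rw [hd, abs_of_nonpos (by linarith : y - x ≤ 0)]; ring
      have h1 : 1 + Real.pi * d ≤ x * Real.pi := by
        have : Real.pi * d = x * Real.pi - y * Real.pi := by rw [hdd]; ring
        linarith
      have h2 := mul_le_mul hpy h1 (by positivity) (by positivity)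
      nlinarith [h2]
  have h32 : Real.pi^3 < 32 := by
    nlinarith [Real.pi_lt_d2, Real.pi_pos, Real.pi_gt_three]
  have step1 : (1:ℝ)/2 * (d / (x*y)) ≤ Real.pi^2 * d / (2 * (1 + Real.pi * d)) := by
    have e4 : (1:ℝ)/2 * (d / (x*y)) = d / (2 * (x*y)) := by ring
    rw [e4, div_le_div_iff₀ (by positivity) (by positivity)]
    nlinarith [mul_le_mul_of_nonneg_left hxy hd0]
  have step2 : Real.pi^2 * d / (2 * (1 + Real.pi * d)) ≤ Real.sqrt (2 * d) := by
    rw [Real.le_sqrt (by positivity) (by positivity), div_pow,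
      div_le_iff₀ (by positivity)]
    nlinarith [mul_nonneg hd0 (sq_nonneg (Real.pi * d - 1)),
      mul_le_mul_of_nonneg_right h32.le (sq_nonneg d), hpi, hd0,
      mul_nonneg (mul_nonneg hd0 hd0) hpi.le]
  calc |x * Real.sin (1/x) - y * Real.sin (1/y)| ≤ 1/2 * (d / (x*y)) := key
    _ ≤ _ := le_trans step1 step2
end

section
/- For every real x ≥ 1/π, x·sin(1/x) ≤ √(2·(x − 1/π)). -/
open Real

lemma key_sin_sq (t : ℝ) (ht0 : 0 < t) (htπ : t ≤ Real.pi) :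
    Real.pi * Real.sin t ^ 2 ≤ 2 * t * (Real.pi - t) := by
  have hπ := Real.pi_pos
  have hπ2 := Real.pi_gt_three
  have hd : (0:ℝ) < Real.pi + 2 := by linarith
  have hs0 : 0 ≤ Real.sin t := Real.sin_nonneg_of_nonneg_of_le_pi ht0.le htπ
  rcases le_or_gt t (2 * Real.pi / (Real.pi + 2)) with h1 | h1
  · have h1' : t * (Real.pi + 2) ≤ 2 * Real.pi := by
      rw [← le_div_iff₀ hd]; exact h1
    have hst : Real.sin t ≤ t := Real.sin_le ht0.le
    have hsq : Real.sin t ^ 2 ≤ t ^ 2 := by nlinarith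
    nlinarith [mul_le_mul_of_nonneg_left hsq hπ.le,
      mul_le_mul_of_nonneg_left h1' ht0.le]
  · rcases le_or_gt (Real.pi ^ 2 / (Real.pi + 2)) t with h2 | h2
    · have h2' : Real.pi ^ 2 ≤ t * (Real.pi + 2) := by
        rw [← div_le_iff₀ hd]; exact h2
      have hst : Real.sin t ≤ Real.pi - t := by
        have := Real.sin_le (x := Real.pi - t) (by linarith)
        rwa [Real.sin_pi_sub] at this
      have hsq : Real.sin t ^ 2 ≤ (Real.pi - t) ^ 2 := by nlinarith
      nlinarith [mul_le_mul_of_nonneg_left hsq hπ.le,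
        mul_nonneg (sub_nonneg.mpr htπ) (sub_nonneg.mpr h2')]
    · have h1' : 2 * Real.pi ≤ t * (Real.pi + 2) := by
        rw [← div_le_iff₀ hd]; exact h1.le
      have h2' : t * (Real.pi + 2) ≤ Real.pi ^ 2 := by
        rw [← le_div_iff₀ hd]; exact h2.le
      have hsq : Real.sin t ^ 2 ≤ 1 := Real.sin_sq_le_one t
      have hq' : (t * (Real.pi + 2) - 2 * Real.pi) * (Real.pi ^ 2 - t * (Real.pi + 2)) ≥ 0 :=
        mul_nonneg (by linarith) (by linarith)
      have hmain : Real.pi ≤ 2 * t * (Real.pi - t) := by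
        nlinarith [hq', sq_nonneg (Real.pi + 2), mul_pos hπ hπ, sq_nonneg (Real.pi - 2)]
      nlinarith [mul_le_mul_of_nonneg_left hsq hπ.le]

theorem f_le_sqrt (x : ℝ) (hx : 1 / Real.pi ≤ x) :
    x * Real.sin (1 / x) ≤ Real.sqrt (2 * (x - 1 / Real.pi)) := by
  have hπ := Real.pi_pos
  have hx0 : 0 < x := lt_of_lt_of_le (by positivity) hx
  have ht0 : 0 < 1 / x := by positivity
  have htπ : 1 / x ≤ Real.pi := by
    rw [div_le_iff₀ hx0]
    calc (1:ℝ) = Real.pi * (1 / Real.pi) := by field_simp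
    _ ≤ Real.pi * x := by nlinarith
  have hs0 : 0 ≤ Real.sin (1 / x) := Real.sin_nonneg_of_nonneg_of_le_pi ht0.le htπ
  have hL0 : 0 ≤ x * Real.sin (1 / x) := mul_nonneg hx0.le hs0
  rw [Real.le_sqrt hL0 (by nlinarith)]
  have key := key_sin_sq (1 / x) ht0 htπ
  have hx2 : (0:ℝ) < x ^ 2 := by positivity
  have expand : 2 * (1 / x) * (Real.pi - 1 / x) * x ^ 2 = Real.pi * (2 * (x - 1 / Real.pi)) := by
    field_simp
  nlinarith [mul_le_mul_of_nonneg_right key hx2.le, sq_nonneg (Real.sin (1/x))]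
end

section
/- For each integer n ≥ 1, the function f(x) = x·sin(1/x) is monotone on the closed interval [1/α_{n+1}, 1/α_n]; that is, its derivative f'(x) = sin(1/x) − (1/x)·cos(1/x) has constant sign on that interval (it is everywhere ≥ 0 or everywhere ≤ 0 there). -/
open Real Set

private lemma phi_hasDerivAt (t : ℝ) :
    HasDerivAt (fun t => Real.sin t - t * Real.cos t) (t * Real.sin t) t := by
  have h := (Real.hasDerivAt_sin t).sub ((hasDerivAt_id t).mul (Real.hasDerivAt_cos t))
  exact h.congr_deriv (by simp [id])


private lemma sin_sign (m : ℕ) {t : ℝ} (h1 : (m : ℝ) * π < t) (h2 : t < (m + 1 : ℕ) * π) :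
    0 < (-1 : ℝ) ^ m * Real.sin t := by
  have hs : Real.sin t = (-1 : ℝ) ^ m * Real.sin (t - m * π) := by
    have := Real.sin_add_nat_mul_pi (t - m * π) m
    simpa using this
  have h0 : 0 < t - m * π := by linarith
  have h1' : t - m * π < π := by
    have : ((m + 1 : ℕ) : ℝ) = (m : ℝ) + 1 := by push_cast; ring
    rw [this] at h2; linarith
  have hpos := Real.sin_pos_of_pos_of_lt_pi h0 h1'
  rw [hs]
  have : ((-1 : ℝ) ^ m) * ((-1 : ℝ) ^ m) = 1 := by
    rw [← pow_add, ← two_mul, pow_mul]; norm_num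
  nlinarith [sq_nonneg ((-1 : ℝ) ^ m)]

/-- On each interval `[mπ, (m+1)π]` (with `m ≥ 1`), `φ(t) = sin t - t cos t` is monotone
(strictly mono if `m` even, strictly anti if `m` odd). We only need the sign consequence. -/
private lemma phi_sign (α : ℕ → ℝ)
    (hα : ∀ n : ℕ, 1 ≤ n →
      α n ∈ Set.Ioo (n * Real.pi) (n * Real.pi + Real.pi / 2) ∧
        Real.sin (α n) - α n * Real.cos (α n) = 0)
    (n : ℕ) (hn : 1 ≤ n) :
    ∀ t ∈ Set.Icc (α n) (α (n + 1)),
      0 ≤ (-1 : ℝ) ^ n * (Real.sin t - t * Real.cos t) := by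
  obtain ⟨⟨han1, han2⟩, haneq⟩ := hα n hn
  obtain ⟨⟨ham1, ham2⟩, hameq⟩ := hα (n + 1) (by omega)
  have hpi := Real.pi_pos
  set φ : ℝ → ℝ := fun t => Real.sin t - t * Real.cos t with hφ
  -- φ is strictly monotone (with sign (-1)^m) on [mπ, (m+1)π]
  have key : ∀ m : ℕ, 1 ≤ m → StrictMonoOn (fun t => (-1 : ℝ) ^ m * φ t)
      (Set.Icc ((m : ℝ) * π) ((m + 1 : ℕ) * π)) := by
    intro m hm
    apply strictMonoOn_of_deriv_pos (convex_Icc _ _)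
    · exact (continuousOn_const.mul ((Real.continuous_sin.sub
        (continuous_id.mul Real.continuous_cos)).continuousOn))
    · intro x hx
      rw [interior_Icc] at hx
      have hd : HasDerivAt (fun t => (-1 : ℝ) ^ m * φ t) ((-1 : ℝ) ^ m * (x * Real.sin x)) x :=
        (phi_hasDerivAt x).const_mul _
      rw [hd.deriv]
      have hx0 : 0 < x := lt_trans (by positivity) hx.1
      have := sin_sign m hx.1 hx.2
      nlinarith
  rintro t ⟨ht1, ht2⟩
  rcases le_or_gt t ((n + 1 : ℕ) * π) with hcase | hcase
  · -- t ∈ [α n, (n+1)π]: use monotonicity on [nπ, (n+1)π]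
    have hmem1 : α n ∈ Set.Icc ((n : ℝ) * π) ((n + 1 : ℕ) * π) := by
      constructor
      · exact le_of_lt han1
      · push_cast; push_cast at ham1; nlinarith
    have hmem2 : t ∈ Set.Icc ((n : ℝ) * π) ((n + 1 : ℕ) * π) :=
      ⟨le_trans hmem1.1 ht1, hcase⟩
    have := (key n hn).monotoneOn hmem1 hmem2 ht1
    simp only [hφ] at this ⊢
    calc (0:ℝ) = (-1 : ℝ) ^ n * (Real.sin (α n) - α n * Real.cos (α n)) := by
          rw [haneq]; ring
      _ ≤ _ := this
  · -- t ∈ ((n+1)π, α (n+1)]: use monotonicity of (-1)^(n+1) φ on [(n+1)π, (n+2)π]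
    have hmem2 : α (n + 1) ∈ Set.Icc (((n + 1 : ℕ) : ℝ) * π) ((n + 2 : ℕ) * π) := by
      constructor
      · exact le_of_lt ham1
      · push_cast; push_cast at ham2; nlinarith
    have hmem1 : t ∈ Set.Icc (((n + 1 : ℕ) : ℝ) * π) ((n + 2 : ℕ) * π) :=
      ⟨le_of_lt hcase, le_trans ht2 hmem2.2⟩
    have hkey := (key (n + 1) (by omega)).monotoneOn hmem1 hmem2 ht2
    simp only [hφ] at hkey ⊢
    have hpow : (-1 : ℝ) ^ (n + 1) = -((-1 : ℝ) ^ n) := by ring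
    rw [hpow] at hkey
    have : -((-1:ℝ)^n) * (Real.sin (α (n+1)) - α (n+1) * Real.cos (α (n+1))) = 0 := by
      rw [hameq]; ring
    linarith

theorem monotone_on_interval (α : ℕ → ℝ)
    (hα : ∀ n : ℕ, 1 ≤ n →
      α n ∈ Set.Ioo (n * Real.pi) (n * Real.pi + Real.pi / 2) ∧
        Real.sin (α n) - α n * Real.cos (α n) = 0)
    (n : ℕ) (hn : 1 ≤ n) :
    (MonotoneOn (fun x => x * Real.sin (1 / x)) (Set.Icc (1 / α (n + 1)) (1 / α n)) ∨
      AntitoneOn (fun x => x * Real.sin (1 / x)) (Set.Icc (1 / α (n + 1)) (1 / α n))) ∧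
    ((∀ x ∈ Set.Icc (1 / α (n + 1)) (1 / α n),
        0 ≤ Real.sin (1 / x) - (1 / x) * Real.cos (1 / x)) ∨
      (∀ x ∈ Set.Icc (1 / α (n + 1)) (1 / α n),
        Real.sin (1 / x) - (1 / x) * Real.cos (1 / x) ≤ 0)) := by
  have hpi := Real.pi_pos
  obtain ⟨⟨han1, han2⟩, _⟩ := hα n hn
  obtain ⟨⟨ham1, ham2⟩, _⟩ := hα (n + 1) (by omega)
  have hαn_pos : 0 < α n := lt_trans (by positivity) han1
  have hαm_pos : 0 < α (n + 1) := lt_trans (by positivity) ham1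
  -- every x in the interval is positive, and 1/x lies in [α n, α (n+1)]
  have hx_pos : ∀ x ∈ Set.Icc (1 / α (n + 1)) (1 / α n), 0 < x := by
    rintro x ⟨h1, _⟩
    exact lt_of_lt_of_le (by positivity) h1
  have hinv : ∀ x ∈ Set.Icc (1 / α (n + 1)) (1 / α n),
      1 / x ∈ Set.Icc (α n) (α (n + 1)) := by
    rintro x ⟨h1, h2⟩
    have hx : 0 < x := lt_of_lt_of_le (by positivity) h1
    constructor
    · rw [le_div_iff₀ hx]
      nlinarith [mul_le_mul_of_nonneg_left h2 (le_of_lt hαn_pos), mul_one_div_cancel (ne_of_gt hαn_pos)]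
    · calc 1 / x ≤ 1 / (1 / α (n + 1)) := by
            apply one_div_le_one_div_of_le (by positivity) h1
        _ = α (n + 1) := by field_simp
  have hsign := phi_sign α hα n hn
  -- derivative of f
  have hderiv : ∀ x : ℝ, 0 < x →
      HasDerivAt (fun x => x * Real.sin (1 / x))
        (Real.sin (1 / x) - (1 / x) * Real.cos (1 / x)) x := by
    intro x hx
    have hx0 : x ≠ 0 := ne_of_gt hx
    have h1 : HasDerivAt (fun x : ℝ => 1 / x) (-(1 / x ^ 2)) x := by
      simpa [one_div] using hasDerivAt_inv hx0
    have h2 : HasDerivAt (fun x : ℝ => Real.sin (1 / x))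
        (Real.cos (1 / x) * (-(1 / x ^ 2))) x :=
      (Real.hasDerivAt_sin (1 / x)).comp x h1
    have h3 := (hasDerivAt_id x).mul h2
    refine h3.congr_deriv ?_
    field_simp
    simp only [id]
    ring
  rcases Nat.even_or_odd n with hev | hod
  · -- n even: derivative nonneg, monotone
    have hnonneg : ∀ x ∈ Set.Icc (1 / α (n + 1)) (1 / α n),
        0 ≤ Real.sin (1 / x) - (1 / x) * Real.cos (1 / x) := by
      intro x hx
      have := hsign (1 / x) (hinv x hx)
      rw [hev.neg_one_pow] at this
      linarith
    refine ⟨Or.inl ?_, Or.inl hnonneg⟩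
    apply monotoneOn_of_deriv_nonneg (convex_Icc _ _)
    · apply ContinuousOn.mul continuousOn_id
      apply Real.continuous_sin.comp_continuousOn
      apply ContinuousOn.div continuousOn_const continuousOn_id
      intro x hx; exact ne_of_gt (hx_pos x hx)
    · intro x hx
      rw [interior_Icc] at hx
      exact (hderiv x (hx_pos x (Set.mem_Icc_of_Ioo hx))).differentiableAt.differentiableWithinAt
    · intro x hx
      rw [interior_Icc] at hx
      have hx' := Set.mem_Icc_of_Ioo hx
      rw [(hderiv x (hx_pos x hx')).deriv]
      exact hnonneg x hx'
  · -- n odd: derivative nonpos, antitone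
    have hnonpos : ∀ x ∈ Set.Icc (1 / α (n + 1)) (1 / α n),
        Real.sin (1 / x) - (1 / x) * Real.cos (1 / x) ≤ 0 := by
      intro x hx
      have := hsign (1 / x) (hinv x hx)
      rw [hod.neg_one_pow] at this
      linarith
    refine ⟨Or.inr ?_, Or.inr hnonpos⟩
    apply antitoneOn_of_deriv_nonpos (convex_Icc _ _)
    · apply ContinuousOn.mul continuousOn_id
      apply Real.continuous_sin.comp_continuousOn
      apply ContinuousOn.div continuousOn_const continuousOn_id
      intro x hx; exact ne_of_gt (hx_pos x hx)
    · intro x hx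
      rw [interior_Icc] at hx
      exact (hderiv x (hx_pos x (Set.mem_Icc_of_Ioo hx))).differentiableAt.differentiableWithinAt
    · intro x hx
      rw [interior_Icc] at hx
      have hx' := Set.mem_Icc_of_Ioo hx
      rw [(hderiv x (hx_pos x hx')).deriv]
      exact hnonpos x hx'
end

section
/- Let J_0 = [1/α_1, ∞) and J_n = [1/α_{n+1}, 1/α_n) for each integer n ≥ 1, and let f(x) = x·sin(1/x). Then the images are nested: f(J_{k+1}) ⊆ f(J_k) for every integer k ≥ 0. -/
open Real Set



-- sign of phi = sin t - t cos t between consecutive zeros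
lemma phi_pos_between (n : ℕ) (a b : ℝ) (ha1 : (n : ℝ) * π ≤ a) (ha2 : a < (n : ℝ) * π + π / 2)
    (hb1 : ((n : ℝ) + 1) * π < b) (hb2 : b < ((n : ℝ) + 1) * π + π / 2)
    (haz : Real.sin a - a * Real.cos a = 0) (hbz : Real.sin b - b * Real.cos b = 0) :
    ∀ t ∈ Set.Ioo a b, 0 < (-1 : ℝ) ^ n * (Real.sin t - t * Real.cos t) := by
  have hπ := Real.pi_pos
  have ha0 : 0 ≤ a := le_trans (by positivity) ha1
  set g : ℝ → ℝ := fun t => (-1 : ℝ) ^ n * (Real.sin t - t * Real.cos t) with hg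
  have hderiv : ∀ t : ℝ, HasDerivAt g ((-1 : ℝ) ^ n * (t * Real.sin t)) t := by
    intro t
    have h1 : HasDerivAt (fun t : ℝ => Real.sin t - t * Real.cos t)
        (Real.cos t - (1 * Real.cos t + t * (-Real.sin t))) t :=
      (Real.hasDerivAt_sin t).sub ((hasDerivAt_id t).mul (Real.hasDerivAt_cos t))
    have := h1.const_mul ((-1 : ℝ) ^ n)
    exact this.congr_deriv (by ring)
  have hcont : Continuous g := by
    fun_prop
  have hap : a < ((n : ℝ) + 1) * π := by nlinarith
  -- strict mono on [a, (n+1)π]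
  have hmono : StrictMonoOn g (Set.Icc a (((n : ℝ) + 1) * π)) := by
    apply strictMonoOn_of_deriv_pos (convex_Icc _ _) hcont.continuousOn
    intro t ht
    rw [interior_Icc] at ht
    rw [(hderiv t).deriv]
    have ht0 : 0 < t := lt_of_le_of_lt ha0 ht.1
    have hsin : 0 < (-1 : ℝ) ^ n * Real.sin t := by
      have h1 : Real.sin (t - n * π) = (-1) ^ n * Real.sin t := Real.sin_sub_nat_mul_pi t n
      have h2 : 0 < Real.sin (t - n * π) :=
        Real.sin_pos_of_pos_of_lt_pi (by linarith [lt_of_le_of_lt ha1 ht.1])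
          (by have := ht.2; linarith)
      linarith [h1 ▸ h2]
    calc (0:ℝ) < t * ((-1 : ℝ) ^ n * Real.sin t) := by positivity
      _ = (-1 : ℝ) ^ n * (t * Real.sin t) := by ring
  -- strict anti on [(n+1)π, b]
  have hanti : StrictAntiOn g (Set.Icc (((n : ℝ) + 1) * π) b) := by
    apply strictAntiOn_of_deriv_neg (convex_Icc _ _) hcont.continuousOn
    intro t ht
    rw [interior_Icc] at ht
    rw [(hderiv t).deriv]
    have ht0 : 0 < t := by nlinarith [ht.1]
    have hsin : 0 < (-1 : ℝ) ^ (n + 1) * Real.sin t := by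
      have h1 : Real.sin (t - (n + 1) * π) = (-1) ^ (n + 1) * Real.sin t := by
        have := Real.sin_sub_nat_mul_pi t (n + 1)
        push_cast at this ⊢
        linarith [this]
      have h2 : 0 < Real.sin (t - ((n : ℝ) + 1) * π) :=
        Real.sin_pos_of_pos_of_lt_pi (by linarith [ht.1]) (by have := ht.2; nlinarith)
      push_cast at h1
      linarith [h1 ▸ h2]
    have : (-1 : ℝ) ^ (n + 1) = -(-1 : ℝ) ^ n := by ring
    rw [this] at hsin
    nlinarith
  have hga : g a = 0 := by simp [hg, haz]
  have hgb : g b = 0 := by simp [hg, hbz]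
  intro t ht
  rcases le_or_gt t (((n : ℝ) + 1) * π) with h | h
  · have := hmono ⟨le_refl a, le_of_lt hap⟩ ⟨le_of_lt ht.1, h⟩ ht.1
    rw [hga] at this; exact this
  · have := hanti ⟨le_of_lt h, le_of_lt ht.2⟩ ⟨le_of_lt hb1, le_refl b⟩ ht.2
    rw [hgb] at this; exact this


lemma f_hasDerivAt {x : ℝ} (hx : x ≠ 0) :
    HasDerivAt (fun x : ℝ => x * Real.sin (1 / x))
      (Real.sin (1 / x) - (1 / x) * Real.cos (1 / x)) x := by
  have h1 : HasDerivAt (fun x : ℝ => 1 / x) (-(1 / x ^ 2)) x := by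
    simpa using (hasDerivAt_inv hx)
  have h2 : HasDerivAt (fun x : ℝ => Real.sin (1 / x)) (Real.cos (1 / x) * (-(1 / x ^ 2))) x :=
    (Real.hasDerivAt_sin (1 / x)).comp x h1
  have h3 := (hasDerivAt_id x).mul h2
  refine h3.congr_deriv ?_
  simp only [id]
  field_simp
  ring

lemma f_contOn {u v : ℝ} (hu : 0 < u) :
    ContinuousOn (fun x : ℝ => x * Real.sin (1 / x)) (Set.Icc u v) := by
  apply ContinuousOn.mul continuousOn_id
  apply Real.continuous_sin.comp_continuousOn
  apply ContinuousOn.div continuousOn_const continuousOn_id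
  intro x hx; exact ne_of_gt (lt_of_lt_of_le hu hx.1)

lemma f_strictMonoOn {u v : ℝ} (hu : 0 < u)
    (h : ∀ x ∈ Set.Ioo u v, 0 < Real.sin (1 / x) - (1 / x) * Real.cos (1 / x)) :
    StrictMonoOn (fun x : ℝ => x * Real.sin (1 / x)) (Set.Icc u v) := by
  apply strictMonoOn_of_deriv_pos (convex_Icc _ _) (f_contOn hu)
  intro x hx
  rw [interior_Icc] at hx
  rw [(f_hasDerivAt (ne_of_gt (lt_trans hu hx.1))).deriv]
  exact h x hx

lemma f_strictAntiOn {u v : ℝ} (hu : 0 < u)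
    (h : ∀ x ∈ Set.Ioo u v, Real.sin (1 / x) - (1 / x) * Real.cos (1 / x) < 0) :
    StrictAntiOn (fun x : ℝ => x * Real.sin (1 / x)) (Set.Icc u v) := by
  apply strictAntiOn_of_deriv_neg (convex_Icc _ _) (f_contOn hu)
  intro x hx
  rw [interior_Icc] at hx
  rw [(f_hasDerivAt (ne_of_gt (lt_trans hu hx.1))).deriv]
  exact h x hx

set_option maxHeartbeats 1600000 in
theorem nested_images (α : ℕ → ℝ)
    (hα : ∀ n : ℕ, 1 ≤ n →
      α n ∈ Set.Ioo (n * Real.pi) (n * Real.pi + Real.pi / 2) ∧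
        Real.sin (α n) - α n * Real.cos (α n) = 0)
    (J : ℕ → Set ℝ)
    (hJ0 : J 0 = Set.Ici (1 / α 1))
    (hJ : ∀ n : ℕ, 1 ≤ n → J n = Set.Ico (1 / α (n + 1)) (1 / α n)) :
    ∀ k : ℕ, (fun x => x * Real.sin (1 / x)) '' J (k + 1) ⊆
      (fun x => x * Real.sin (1 / x)) '' J k := by
  have hπ := Real.pi_pos
  have hmem : ∀ n : ℕ, 1 ≤ n → (n : ℝ) * π < α n ∧ α n < (n : ℝ) * π + π / 2 :=
    fun n hn => ⟨(hα n hn).1.1, (hα n hn).1.2⟩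
  have hz : ∀ n : ℕ, 1 ≤ n → Real.sin (α n) = α n * Real.cos (α n) := by
    intro n hn; linarith [(hα n hn).2]
  have hposα : ∀ n : ℕ, 1 ≤ n → 0 < α n := by
    intro n hn
    have h1 : (1 : ℝ) ≤ (n : ℝ) := by exact_mod_cast hn
    nlinarith [(hmem n hn).1]
  have hlt : ∀ n : ℕ, 1 ≤ n → α n < α (n + 1) := by
    intro n hn
    have h1 := (hmem n hn).2
    have h2 := (hmem (n + 1) (by omega)).1
    push_cast at h2
    nlinarith
  have hcos_sign : ∀ n : ℕ, 1 ≤ n → 0 < (-1 : ℝ) ^ n * Real.cos (α n) := by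
    intro n hn
    have h1 : Real.cos (α n - n * π) = (-1) ^ n * Real.cos (α n) :=
      Real.cos_sub_nat_mul_pi (α n) n
    have h2 : 0 < Real.cos (α n - n * π) := by
      apply Real.cos_pos_of_mem_Ioo
      constructor
      · linarith [(hmem n hn).1]
      · linarith [(hmem n hn).2]
    linarith [h1 ▸ h2]
  have hfval : ∀ n : ℕ, 1 ≤ n → (1 / α n) * Real.sin (1 / (1 / α n)) = Real.cos (α n) := by
    intro n hn
    have h0 : α n ≠ 0 := ne_of_gt (hposα n hn)
    rw [one_div_one_div, hz n hn]
    field_simp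
  have hcos2 : ∀ n : ℕ, 1 ≤ n → (Real.cos (α n)) ^ 2 * (1 + (α n) ^ 2) = 1 := by
    intro n hn
    have h := Real.sin_sq_add_cos_sq (α n)
    have h2 : Real.sin (α n) ^ 2 = (α n) ^ 2 * Real.cos (α n) ^ 2 := by
      rw [hz n hn]; ring
    nlinarith
  -- sign of the derivative on each interval
  have hderiv_sign : ∀ m : ℕ, 1 ≤ m → ∀ x ∈ Set.Ioo (1 / α (m + 1)) (1 / α m),
      0 < (-1 : ℝ) ^ m * (Real.sin (1 / x) - (1 / x) * Real.cos (1 / x)) := by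
    intro m hm x hx
    have hpa := hposα m hm
    have hpb := hposα (m + 1) (by omega)
    have hx0 : 0 < x := lt_trans (by positivity) hx.1
    have h1 : α m < 1 / x := by
      rw [lt_div_iff₀ hx0]
      have := hx.2
      rw [lt_div_iff₀ hpa] at this
      linarith
    have h2 : 1 / x < α (m + 1) := by
      rw [div_lt_iff₀ hx0]
      have := hx.1
      rw [div_lt_iff₀ hpb] at this
      linarith
    have hb1 : ((m : ℝ) + 1) * π < α (m + 1) := by
      have := (hmem (m + 1) (by omega)).1; push_cast at this; linarith
    have hb2 : α (m + 1) < ((m : ℝ) + 1) * π + π / 2 := by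
      have := (hmem (m + 1) (by omega)).2; push_cast at this; linarith
    exact phi_pos_between m (α m) (α (m + 1)) (le_of_lt (hmem m hm).1) (hmem m hm).2
      hb1 hb2 (hα m hm).2 (hα (m + 1) (by omega)).2 (1 / x) ⟨h1, h2⟩
  intro k y hy
  rw [hJ (k + 1) (by omega)] at hy
  obtain ⟨x, hx, rfl⟩ := hy
  replace hx : x ∈ Set.Ico (1 / α (k + 2)) (1 / α (k + 1)) := hx
  set f : ℝ → ℝ := fun x => x * Real.sin (1 / x) with hf
  have hpa := hposα (k + 1) (by omega)
  have hpb := hposα (k + 2) (by omega)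
  have hab : α (k + 1) < α (k + 2) := hlt (k + 1) (by omega)
  have hIcc : x ∈ Set.Icc (1 / α (k + 2)) (1 / α (k + 1)) := ⟨hx.1, le_of_lt hx.2⟩
  have hItop : (1 / α (k + 1)) ∈ Set.Icc (1 / α (k + 2)) (1 / α (k + 1)) := by
    constructor
    · exact one_div_le_one_div_of_le hpa (le_of_lt hab)
    · exact le_refl _
  have hu0 : (0 : ℝ) < 1 / α (k + 2) := by positivity
  have hfa : f (1 / α (k + 1)) = Real.cos (α (k + 1)) := hfval (k + 1) (by omega)
  have hfb : f (1 / α (k + 2)) = Real.cos (α (k + 2)) := hfval (k + 2) (by omega)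
  -- bounds on y = f x depending on the parity of k
  have hbounds : (Even k → Real.cos (α (k + 1)) < f x ∧ f x ≤ Real.cos (α (k + 2))) ∧
      (¬ Even k → Real.cos (α (k + 2)) ≤ f x ∧ f x < Real.cos (α (k + 1))) := by
    constructor
    · intro hke
      have hkp : (-1 : ℝ) ^ (k + 1) = -1 := (Even.add_one hke).neg_one_pow
      have hanti : StrictAntiOn f (Set.Icc (1 / α (k + 2)) (1 / α (k + 1))) := by
        apply f_strictAntiOn hu0
        intro t ht
        have := hderiv_sign (k + 1) (by omega) t ht
        rw [hkp] at this
        linarith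
      constructor
      · have := hanti hIcc hItop hx.2
        rw [hfa] at this; exact this
      · rcases eq_or_lt_of_le hx.1 with h | h
        · rw [h] at hfb; exact hfb.le
        · have := hanti (Set.left_mem_Icc.2 (le_trans hItop.1 hItop.2)) hIcc h
          rw [hfb] at this; linarith
    · intro hko
      have hkp : (-1 : ℝ) ^ (k + 1) = 1 := (Odd.add_one (Nat.not_even_iff_odd.1 hko)).neg_one_pow
      have hmono : StrictMonoOn f (Set.Icc (1 / α (k + 2)) (1 / α (k + 1))) := by
        apply f_strictMonoOn hu0
        intro t ht
        have := hderiv_sign (k + 1) (by omega) t ht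
        rw [hkp] at this
        linarith
      constructor
      · rcases eq_or_lt_of_le hx.1 with h | h
        · rw [h] at hfb; exact hfb.ge
        · have := hmono (Set.left_mem_Icc.2 (le_trans hItop.1 hItop.2)) hIcc h
          rw [hfb] at this; linarith
      · have := hmono hIcc hItop hx.2
        rw [hfa] at this; exact this
  rcases Nat.eq_zero_or_pos k with hk0 | hk1
  · -- k = 0
    subst hk0
    simp only [Nat.zero_add] at hpa hpb hab hIcc hItop hfa hfb hx hbounds
    obtain ⟨hya, hyb⟩ := hbounds.1 Even.zero
    rw [hJ0]
    have hgt3 := Real.pi_gt_three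
    have hlt4 := Real.pi_lt_d2
    have ha1 : 1 / α 1 ≤ 1 := by
      rw [div_le_one hpa]
      have := (hmem 1 (le_refl 1)).1
      push_cast at this
      nlinarith
    have hf1 : f 1 = Real.sin 1 := by simp [hf]
    have hsin1 : (1 : ℝ) / 2 < Real.sin 1 := by
      have h1 : Real.sin (π / 6) < Real.sin 1 := by
        apply Real.strictMonoOn_sin ⟨by linarith, by linarith⟩ ⟨by linarith, by linarith⟩
        linarith
      rw [Real.sin_pi_div_six] at h1
      exact h1
    have hcb : Real.cos (α 2) ≤ 1 / α 2 := by
      have h1 : Real.sin (α 2) ≤ 1 := Real.sin_le_one _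
      have h2 := hz 2 (by omega)
      rw [le_div_iff₀ hpb]
      nlinarith
    have hb2π : 2 * π < α 2 := by
      have := (hmem 2 (by omega)).1; push_cast at this; linarith
    have hyub : f x ≤ Real.sin 1 := by
      have : 1 / α 2 < 1 / 2 := by
        rw [div_lt_div_iff₀ hpb (by norm_num)]
        linarith
      linarith
    have hsub := intermediate_value_Icc ha1 (f_contOn (by positivity))
    have hyIcc : f x ∈ Set.Icc (f (1 / α 1)) (f 1) := by
      rw [hfa, hf1]
      exact ⟨le_of_lt hya, hyub⟩
    obtain ⟨x', hx', hfx'⟩ := hsub hyIcc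
    exact ⟨x', hx'.1, hfx'⟩
  · -- k ≥ 1
    rw [hJ k hk1]
    have hpc := hposα k hk1
    have hca : α k < α (k + 1) := hlt k hk1
    have hcb : α k < α (k + 2) := lt_trans hca hab
    have h1ac : 1 / α (k + 1) ≤ 1 / α k := one_div_le_one_div_of_le hpc (le_of_lt hca)
    have hfc : f (1 / α k) = Real.cos (α k) := hfval k hk1
    have hc2 := hcos2 k hk1
    have hb2 := hcos2 (k + 2) (by omega)
    rcases Nat.even_or_odd k with hke | hko
    · -- k even : cos (α k) > 0, cos (α (k+2)) > 0, f x ∈ (cos (α (k+1)), cos (α (k+2))]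
      obtain ⟨hya, hyb⟩ := hbounds.1 hke
      have hsc : 0 < Real.cos (α k) := by
        have := hcos_sign k hk1; rw [hke.neg_one_pow] at this; linarith
      have hsb : 0 < Real.cos (α (k + 2)) := by
        have := hcos_sign (k + 2) (by omega)
        rw [(by simpa using hke.add (even_two) : Even (k + 2)).neg_one_pow] at this
        linarith
      have hcomp : Real.cos (α (k + 2)) < Real.cos (α k) := by
        have hd : 0 < (α (k + 2)) ^ 2 - (α k) ^ 2 := by nlinarith
        have hsq : Real.cos (α (k + 2)) ^ 2 < Real.cos (α k) ^ 2 := by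
          nlinarith [mul_pos (pow_pos hsb 2) hd, sq_nonneg (α k)]
        nlinarith
      have hsub := intermediate_value_Icc h1ac (f_contOn (by positivity))
      have hyIcc : f x ∈ Set.Icc (f (1 / α (k + 1))) (f (1 / α k)) := by
        rw [hfa, hfc]
        exact ⟨le_of_lt hya, by linarith⟩
      obtain ⟨x', hx', hfx'⟩ := hsub hyIcc
      refine ⟨x', ⟨hx'.1, lt_of_le_of_ne hx'.2 ?_⟩, hfx'⟩
      intro h
      rw [h] at hfx'
      have heq : f (1 / α k) = f x := hfx'
      rw [hfc] at heq
      linarith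
    · -- k odd
      obtain ⟨hyb, hya⟩ := hbounds.2 (Nat.not_even_iff_odd.2 hko)
      have hsc : Real.cos (α k) < 0 := by
        have := hcos_sign k hk1; rw [hko.neg_one_pow] at this; linarith
      have hsb : Real.cos (α (k + 2)) < 0 := by
        have := hcos_sign (k + 2) (by omega)
        rw [(by simpa using hko.add_even (even_two) : Odd (k + 2)).neg_one_pow] at this
        linarith
      have hcomp : Real.cos (α k) < Real.cos (α (k + 2)) := by
        have hd : 0 < (α (k + 2)) ^ 2 - (α k) ^ 2 := by nlinarith
        have hsq : Real.cos (α (k + 2)) ^ 2 < Real.cos (α k) ^ 2 := by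
          nlinarith [mul_pos (pow_pos (neg_pos.2 hsb) 2) hd, sq_nonneg (α k)]
        nlinarith
      have hsub := intermediate_value_Icc' h1ac (f_contOn (by positivity))
      have hyIcc : f x ∈ Set.Icc (f (1 / α k)) (f (1 / α (k + 1))) := by
        rw [hfa, hfc]
        exact ⟨by linarith, le_of_lt hya⟩
      obtain ⟨x', hx', hfx'⟩ := hsub hyIcc
      refine ⟨x', ⟨hx'.1, lt_of_le_of_ne hx'.2 ?_⟩, hfx'⟩
      intro h
      rw [h] at hfx'
      have heq : f (1 / α k) = f x := hfx'
      rw [hfc] at heq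
      linarith
end
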